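/- arXiv:2406.13911 — 6 statements merged into one kernel-verified Lean document; each statement's English description precedes it below -/
import Mathlib

section
/- Theorem (width-1 prophet inequality, Theorem 3.1 of the paper). For every DAG instance of width 1 (i.e., possessing a focal s,t-path P₀ that visits every node), there exists an online algorithm A such that E[Σ_{e ∈ A} W_e] ≥ (1/2)·E[OPT]. -/
open MeasureTheory ProbabilityTheory

/-- A DAG instance: nodes `0,…,n` listed in topological order (start `s = 0`,
target `t = n`), and a finite set `E` of edges with `src e < dst e ≤ n`. -/
structure DAGInst where
  n : ℕ
  n_pos : 1 ≤ n
  E : Type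
  fintypeE : Fintype E
  src : E → ℕ
  dst : E → ℕ
  src_lt_dst : ∀ e, src e < dst e
  dst_le_n : ∀ e, dst e ≤ n

attribute [instance] DAGInst.fintypeE

/-- Extension of a probability space by an additional independent
uniform-`[0,1]` random variable (the second coordinate). -/
noncomputable def extMeasure {Ω : Type} [MeasurableSpace Ω] (μ : Measure Ω) :
    Measure (Ω × ℝ) :=
  μ.prod (MeasureTheory.volume.restrict (Set.Icc (0 : ℝ) 1))

namespace DAGInst

variable (G : DAGInst)

/-- `p` is an `s,t`-path: it starts at node `0`, ends at node `n`, and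
consecutive edges match. -/
def IsPath (p : List G.E) : Prop :=
  p.head?.map G.src = some 0 ∧ p.getLast?.map G.dst = some G.n ∧
    List.Chain' (fun e f => G.dst e = G.src f) p

/-- The path `p` visits the node `v`. -/
def Visits (p : List G.E) (v : ℕ) : Prop :=
  v = 0 ∨ ∃ e ∈ p, G.dst e = v

instance (p : List G.E) (v : ℕ) : Decidable (G.Visits p v) :=
  inferInstanceAs (Decidable (v = 0 ∨ ∃ e ∈ p, G.dst e = v))

/-- The value of the path `p` under (realized) weights `w`. -/
def pathValue (p : List G.E) (w : G.E → ℝ) : ℝ :=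
  (p.map w).sum

/-- The edge that the path `p` takes out of node `i` (if any). -/
def takeOut (p : List G.E) (i : ℕ) : Option G.E :=
  p.find? fun e => G.src e == i

/-- The value of the prophet: the maximum value of an `s,t`-path. -/
noncomputable def OPTval {Ω : Type} (W : G.E → Ω → ℝ) (ω : Ω) : ℝ :=
  sSup {x | ∃ p, G.IsPath p ∧ x = G.pathValue p fun e => W e ω}

/-- The independence assumption on the weights: the tuples of weights of edges
leaving distinct nodes are mutually independent. -/
def IndepWeights {Ω : Type} [MeasurableSpace Ω] (W : G.E → Ω → ℝ) (μ : Measure Ω) : Prop :=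
  iIndepFun
    (fun (i : ℕ) (ω : Ω) => fun e : {e : G.E // G.src e = i} => W e.1 ω) μ

/-- The information available at node `i`: the σ-algebra generated by the auxiliary
uniform random variable `U = Prod.snd` and the weights of edges leaving nodes `≤ i`. -/
def infoAt {Ω : Type} (W : G.E → Ω → ℝ) (i : ℕ) : MeasurableSpace (Ω × ℝ) :=
  MeasurableSpace.comap (Prod.snd : Ω × ℝ → ℝ) inferInstance ⊔
    ⨆ e : G.E, ⨆ _ : G.src e ≤ i,
      MeasurableSpace.comap (fun ω' : Ω × ℝ => W e ω'.1) inferInstance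

/-- `A` is an online algorithm: a random `s,t`-path on the extended space such that
the edge taken out of each node `i < n` is measurable with respect to the information
available at node `i`. -/
def IsOnlineAlg {Ω : Type} (W : G.E → Ω → ℝ) (A : Ω × ℝ → List G.E) : Prop :=
  (∀ ω', G.IsPath (A ω')) ∧
    ∀ i < G.n, @Measurable (Ω × ℝ) (Option G.E) (G.infoAt W i) ⊤
      fun ω' => G.takeOut (A ω') i

/-- The σ-algebra generated by all the weights. -/
def sigmaW {Ω : Type} (W : G.E → Ω → ℝ) : MeasurableSpace Ω :=
  ⨆ e : G.E, MeasurableSpace.comap (W e) inferInstance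

/-- A path is feasible if, for every label `ℓ`, it uses at most `cap ℓ` edges
carrying the label `ℓ`. -/
def Feasible {L : Type} [DecidableEq L] (lab : G.E → Finset L) (cap : L → ℕ)
    (p : List G.E) : Prop :=
  ∀ ℓ : L, (p.filter fun e => decide (ℓ ∈ lab e)).length ≤ cap ℓ

/-- The value of the prophet in the labeled model: the maximum value of a feasible
`s,t`-path. -/
noncomputable def OPTvalFeas {Ω : Type} {L : Type} [DecidableEq L]
    (lab : G.E → Finset L) (cap : L → ℕ) (W : G.E → Ω → ℝ) (ω : Ω) : ℝ :=
  sSup {x | ∃ p, G.IsPath p ∧ G.Feasible lab cap p ∧ x = G.pathValue p fun e => W e ω}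

/-- Node `v` is reachable from node `u`. -/
def Reaches (u v : ℕ) : Prop :=
  u = v ∨ ∃ q : List G.E, q.head?.map G.src = some u ∧ q.getLast?.map G.dst = some v ∧
    List.Chain' (fun e f => G.dst e = G.src f) q

/-- Source of an edge of the auxiliary graph `G_i` (left: original edge,
right: artificial edge replacing an edge leaving `V(P_i)`). -/
def auxSrc : G.E ⊕ G.E → ℕ
  | Sum.inl e => G.src e
  | Sum.inr e => G.src e

/-- Destination of an edge of the auxiliary graph `G_i`: an artificial edge built from
`e` ends at the smallest node of `V(P_i)` reachable from `dst e`. -/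
noncomputable def auxDst (Pi : List G.E) : G.E ⊕ G.E → ℕ
  | Sum.inl e => G.dst e
  | Sum.inr e => sInf {v | G.Visits Pi v ∧ G.Reaches (G.dst e) v}

/-- Which formal edges are actually present in the auxiliary graph `G_i`. -/
def auxValid (Pi : List G.E) : G.E ⊕ G.E → Prop
  | Sum.inl e => G.Visits Pi (G.src e) ∧ G.Visits Pi (G.dst e)
  | Sum.inr e => G.Visits Pi (G.src e) ∧ ¬ G.Visits Pi (G.dst e)

/-- Weight of an edge of the auxiliary graph: an artificial edge inherits the weight
of the original edge. -/
def auxWeight (w : G.E → ℝ) : G.E ⊕ G.E → ℝ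
  | Sum.inl e => w e
  | Sum.inr e => w e

/-- An `s,t`-path of the auxiliary graph `G_i`. -/
def IsAuxPath (Pi : List G.E) (p : List (G.E ⊕ G.E)) : Prop :=
  (∀ f ∈ p, G.auxValid Pi f) ∧
    p.head?.map G.auxSrc = some 0 ∧
    p.getLast?.map (G.auxDst Pi) = some G.n ∧
    List.Chain' (fun f g => G.auxDst Pi f = G.auxSrc g) p

end DAGInst
namespace W1

open Finset MeasureTheory ProbabilityTheory NNReal

variable (G : DAGInst) {Ω : Type} [MeasurableSpace Ω]

/-- The set of edges leaving node `j`. -/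
def Edges (j : ℕ) : Finset G.E := Finset.univ.filter fun e => G.src e = j

/-- Backward-recursive thresholds. -/
noncomputable def thr (μ : Measure Ω) (W : G.E → Ω → ℝ) (j : ℕ) : ℝ :=
  if h : j < G.n then
    ∫ ω, (((Edges G j).sup fun e =>
      (W e ω - ∑ l ∈ (Finset.Ico (j+1) (G.dst e)).attach, thr μ W l.1).toNNReal : ℝ≥0) : ℝ) ∂μ
  else 0
termination_by G.n - j
decreasing_by
  · have hl := l.2
    simp only [Finset.mem_Ico] at hl
    omega

/-- Edge cost. -/
noncomputable def cE (μ : Measure Ω) (W : G.E → Ω → ℝ) (e : G.E) : ℝ :=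
  ∑ l ∈ Finset.Ico (G.src e + 1) (G.dst e), thr G μ W l

/-- Excess at node `j`. -/
noncomputable def Xf (μ : Measure Ω) (W : G.E → Ω → ℝ) (j : ℕ) (ω : Ω) : ℝ :=
  (((Edges G j).sup fun e => (W e ω - cE G μ W e).toNNReal : ℝ≥0) : ℝ)

lemma thr_eq (μ : Measure Ω) (W : G.E → Ω → ℝ) {j : ℕ} (h : j < G.n) :
    thr G μ W j = ∫ ω, Xf G μ W j ω ∂μ := by
  rw [thr, dif_pos h]
  congr 1
  funext ω
  congr 1
  refine Finset.sup_congr rfl fun e he => ?_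
  simp only [Edges, Finset.mem_filter] at he
  rw [Finset.sum_attach _ (fun l => thr G μ W l), cE, he.2]

/-- The greedy pick at node `j`. -/
noncomputable def pick (μ : Measure Ω) (W : G.E → Ω → ℝ) (j : ℕ) (ω : Ω) : Option G.E :=
  (Edges G j).toList.argmax fun e => W e ω - cE G μ W e

/-- The greedy path starting from node `j`, given picks. -/
def gPath (pk : ℕ → Option G.E) (j : ℕ) : List G.E :=
  if h : j < G.n then
    match pk j with
    | none => []
    | some e => if h2 : j < G.dst e then e :: gPath pk (G.dst e) else []
  else []
termination_by G.n - j
decreasing_by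
  · omega

end W1
namespace W1

open Finset MeasureTheory ProbabilityTheory NNReal

variable (G : DAGInst) {Ω : Type} [MeasurableSpace Ω]

/-- Well-formedness of a pick family. -/
def PkOk (pk : ℕ → Option G.E) : Prop :=
  ∀ j, j < G.n → ∃ e, pk j = some e ∧ G.src e = j

lemma gPath_stop (pk : ℕ → Option G.E) {j : ℕ} (h : ¬ j < G.n) : gPath G pk j = [] := by
  rw [gPath, dif_neg h]

lemma gPath_cons {pk : ℕ → Option G.E} {j : ℕ} {e : G.E} (hj : j < G.n)
    (he : pk j = some e) (hsrc : G.src e = j) :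
    gPath G pk j = e :: gPath G pk (G.dst e) := by
  have h2 : j < G.dst e := hsrc ▸ G.src_lt_dst e
  rw [gPath, dif_pos hj, he]
  simp [h2]

lemma gPath_spec {pk : ℕ → Option G.E} (hpk : PkOk G pk) :
    ∀ m j, G.n - j ≤ m → j < G.n →
      (gPath G pk j) ≠ [] ∧ (gPath G pk j).head?.map G.src = some j ∧
      (gPath G pk j).getLast?.map G.dst = some G.n ∧
      List.Chain' (fun e f => G.dst e = G.src f) (gPath G pk j) ∧
      (∀ e ∈ gPath G pk j, j ≤ G.src e) := by
  intro m
  induction m with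
  | zero => intro j hm hj; omega
  | succ m ih =>
    intro j hm hj
    obtain ⟨e, he, hsrc⟩ := hpk j hj
    have hlt : j < G.dst e := hsrc ▸ G.src_lt_dst e
    have hle : G.dst e ≤ G.n := G.dst_le_n e
    have hcons := gPath_cons G hj he hsrc
    by_cases hend : G.dst e < G.n
    · obtain ⟨hne, hhead, hlast, hchain, hmem⟩ := ih (G.dst e) (by omega) hend
      obtain ⟨r, rs, hr⟩ := List.exists_cons_of_ne_nil hne
      refine ⟨by simp [hcons], by simp [hcons, hsrc], ?_, ?_, ?_⟩
      · rw [hcons, hr, List.getLast?_cons_cons, ← hr]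
        exact hlast
      · rw [hcons, List.Chain', List.isChain_cons]
        refine ⟨?_, hchain⟩
        intro b hb
        rw [hr] at hhead hb
        simp only [List.head?_cons, Option.map_some, Option.some.injEq,
          Option.mem_def] at hhead hb
        subst hb
        omega
      · intro f hf
        rw [hcons] at hf
        rcases List.mem_cons.mp hf with rfl | hf
        · omega
        · have := hmem f hf; omega
    · have hn : G.dst e = G.n := by omega
      have h0 : gPath G pk (G.dst e) = [] := gPath_stop G pk (by omega)
      rw [hcons, h0]
      refine ⟨by simp, by simp [hsrc], by simp [hn], List.isChain_singleton _, ?_⟩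
      intro f hf
      simp only [List.mem_singleton] at hf
      subst hf; omega

lemma gPath_isPath {pk : ℕ → Option G.E} (hpk : PkOk G pk) : G.IsPath (gPath G pk 0) := by
  obtain ⟨_, h1, h2, h3, _⟩ := gPath_spec G hpk G.n 0 (by omega) G.n_pos
  exact ⟨h1, h2, h3⟩

lemma takeOut_gPath_of_lt {pk : ℕ → Option G.E} (hpk : PkOk G pk) {j i : ℕ} (hij : i < j) :
    G.takeOut (gPath G pk j) i = none := by
  by_cases hj : j < G.n
  · obtain ⟨_, _, _, _, hmem⟩ := gPath_spec G hpk (G.n - j) j le_rfl hj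
    refine List.find?_eq_none.mpr fun e he => ?_
    have := hmem e he
    simp only [beq_iff_eq]
    omega
  · rw [gPath_stop G pk hj]; rfl

lemma takeOut_gPath_agree {pk1 pk2 : ℕ → Option G.E} (hpk1 : PkOk G pk1) (hpk2 : PkOk G pk2) :
    ∀ m j i, G.n - j ≤ m → j ≤ i →
    (∀ l, j ≤ l → l ≤ i → pk1 l = pk2 l) →
    G.takeOut (gPath G pk1 j) i = G.takeOut (gPath G pk2 j) i := by
  intro m
  induction m with
  | zero =>
    intro j i hm hij _
    have hj : ¬ j < G.n := by omega
    rw [gPath_stop G pk1 hj, gPath_stop G pk2 hj]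
  | succ m ih =>
    intro j i hm hij hagree
    by_cases hj : j < G.n
    · obtain ⟨e, he1, hsrc⟩ := hpk1 j hj
      have he2 : pk2 j = some e := (hagree j le_rfl hij) ▸ he1
      rw [gPath_cons G hj he1 hsrc, gPath_cons G hj he2 hsrc]
      unfold DAGInst.takeOut
      rw [List.find?_cons, List.find?_cons]
      by_cases hsei : G.src e == i
      · simp [hsei]
      · simp only [hsei]
        by_cases hd : G.dst e ≤ i
        · exact ih (G.dst e) i (by have := hsrc ▸ G.src_lt_dst e; omega) hd
            fun l hl1 hl2 => hagree l (by have := hsrc ▸ G.src_lt_dst e; omega) hl2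
        · have hlt : i < G.dst e := by omega
          have h1 := takeOut_gPath_of_lt G hpk1 hlt
          have h2 := takeOut_gPath_of_lt G hpk2 hlt
          unfold DAGInst.takeOut at h1 h2
          rw [h1, h2]
    · rw [gPath_stop G pk1 hj, gPath_stop G pk2 hj]

lemma pathValue_gPath_stop (pk : ℕ → Option G.E) {j : ℕ} (h : ¬ j < G.n) (w : G.E → ℝ) :
    G.pathValue (gPath G pk j) w = 0 := by
  rw [gPath_stop G pk h]; rfl

lemma pathValue_gPath_cons {pk : ℕ → Option G.E} {j : ℕ} {e : G.E} (hj : j < G.n)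
    (he : pk j = some e) (hsrc : G.src e = j) (w : G.E → ℝ) :
    G.pathValue (gPath G pk j) w = w e + G.pathValue (gPath G pk (G.dst e)) w := by
  rw [gPath_cons G hj he hsrc]
  simp [DAGInst.pathValue]

lemma pathValue_gPath_bounds {pk : ℕ → Option G.E} (hpk : PkOk G pk) (w : G.E → ℝ)
    (hw : ∀ e, 0 ≤ w e) :
    ∀ m j, G.n - j ≤ m →
      0 ≤ G.pathValue (gPath G pk j) w ∧
      G.pathValue (gPath G pk j) w ≤ ∑ e ∈ Finset.univ.filter (fun e => j ≤ G.src e), w e := by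
  intro m
  induction m with
  | zero =>
    intro j hm
    rw [pathValue_gPath_stop G pk (by omega)]
    exact ⟨le_rfl, Finset.sum_nonneg fun e _ => hw e⟩
  | succ m ih =>
    intro j hm
    by_cases hj : j < G.n
    · classical
      obtain ⟨e, he, hsrc⟩ := hpk j hj
      have hlt : j < G.dst e := hsrc ▸ G.src_lt_dst e
      rw [pathValue_gPath_cons G hj he hsrc]
      obtain ⟨h0, h1⟩ := ih (G.dst e) (by omega)
      constructor
      · have := hw e; linarith
      · have hsub : insert e (Finset.univ.filter (fun f => G.dst e ≤ G.src f)) ⊆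
            Finset.univ.filter (fun f => j ≤ G.src f) := by
          intro f hf
          simp only [Finset.mem_insert, Finset.mem_filter, Finset.mem_univ, true_and] at hf ⊢
          rcases hf with rfl | hf
          · omega
          · omega
        have hnotmem : e ∉ Finset.univ.filter (fun f => G.dst e ≤ G.src f) := by
          simp only [Finset.mem_filter, Finset.mem_univ, true_and]
          omega
        calc w e + G.pathValue (gPath G pk (G.dst e)) w
            ≤ w e + ∑ f ∈ Finset.univ.filter (fun f => G.dst e ≤ G.src f), w f := by linarith
          _ = ∑ f ∈ insert e (Finset.univ.filter (fun f => G.dst e ≤ G.src f)), w f := by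
              rw [Finset.sum_insert hnotmem]
          _ ≤ _ := Finset.sum_le_sum_of_subset_of_nonneg hsub fun f _ _ => hw f
    · rw [pathValue_gPath_stop G pk hj]
      exact ⟨le_rfl, Finset.sum_nonneg fun e _ => hw e⟩

end W1
namespace W1

open Finset MeasureTheory ProbabilityTheory NNReal

variable (G : DAGInst) {Ω : Type} [MeasurableSpace Ω]

lemma pick_src {μ : Measure Ω} {W : G.E → Ω → ℝ} {j : ℕ} {ω : Ω} {e : G.E}
    (h : pick G μ W j ω = some e) : G.src e = j := by
  have := List.argmax_mem h
  rw [Finset.mem_toList, Edges, Finset.mem_filter] at this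
  exact this.2

lemma pick_max {μ : Measure Ω} {W : G.E → Ω → ℝ} {j : ℕ} {ω : Ω} {e : G.E}
    (h : pick G μ W j ω = some e) {e' : G.E} (h' : G.src e' = j) :
    W e' ω - cE G μ W e' ≤ W e ω - cE G μ W e := by
  refine List.le_of_mem_argmax ?_ h
  rw [Finset.mem_toList, Edges, Finset.mem_filter]
  exact ⟨Finset.mem_univ _, h'⟩

lemma pick_isSome {μ : Measure Ω} {W : G.E → Ω → ℝ} {j : ℕ} (ω : Ω) {e' : G.E}
    (h' : G.src e' = j) : ∃ e, pick G μ W j ω = some e := by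
  cases hp : pick G μ W j ω with
  | some e => exact ⟨e, rfl⟩
  | none =>
    rw [pick, List.argmax_eq_none] at hp
    have : e' ∈ (Edges G j).toList := by
      rw [Finset.mem_toList, Edges, Finset.mem_filter]
      exact ⟨Finset.mem_univ _, h'⟩
    rw [hp] at this
    simp at this

/-- The σ-algebra generated by the weights of edges leaving node `j`. -/
def M1 (W : G.E → Ω → ℝ) (j : ℕ) : MeasurableSpace Ω :=
  ⨆ (e : G.E) (_ : G.src e = j), MeasurableSpace.comap (W e) inferInstance

/-- The σ-algebra generated by the weights of edges leaving nodes `≥ k`. -/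
def Mge (W : G.E → Ω → ℝ) (k : ℕ) : MeasurableSpace Ω :=
  ⨆ (e : G.E) (_ : k ≤ G.src e), MeasurableSpace.comap (W e) inferInstance

lemma measurable_W_M1 {W : G.E → Ω → ℝ} {j : ℕ} {e : G.E} (h : G.src e = j) :
    @Measurable Ω ℝ (M1 G W j) _ (W e) :=
  Measurable.of_comap_le (le_iSup_of_le e (le_iSup_of_le h le_rfl))

lemma measurable_W_Mge {W : G.E → Ω → ℝ} {k : ℕ} {e : G.E} (h : k ≤ G.src e) :
    @Measurable Ω ℝ (Mge G W k) _ (W e) :=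
  Measurable.of_comap_le (le_iSup_of_le e (le_iSup_of_le h le_rfl))

lemma M1_le_Mge {W : G.E → Ω → ℝ} {j k : ℕ} (h : k ≤ j) : M1 G W j ≤ Mge G W k := by
  refine iSup₂_le fun e he => ?_
  exact le_iSup_of_le e (le_iSup_of_le (by omega) le_rfl)

lemma Mge_mono {W : G.E → Ω → ℝ} {k k' : ℕ} (h : k' ≤ k) : Mge G W k ≤ Mge G W k' := by
  refine iSup₂_le fun e he => ?_
  exact le_iSup_of_le e (le_iSup_of_le (by omega) le_rfl)

lemma Mge_le_ambient {W : G.E → Ω → ℝ} (hW : ∀ e, Measurable (W e)) (k : ℕ) :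
    Mge G W k ≤ ‹MeasurableSpace Ω› := by
  refine iSup₂_le fun e he => ?_
  exact (hW e).comap_le

lemma measurable_W_info {W : G.E → Ω → ℝ} {i : ℕ} {e : G.E} (h : G.src e ≤ i) :
    @Measurable (Ω × ℝ) ℝ (G.infoAt W i) _ (fun ω' => W e ω'.1) := by
  refine Measurable.of_comap_le ?_
  exact le_sup_of_le_right (le_iSup_of_le e (le_iSup_of_le h le_rfl))

lemma infoAt_mono {W : G.E → Ω → ℝ} {i i' : ℕ} (h : i ≤ i') : G.infoAt W i ≤ G.infoAt W i' := by
  refine sup_le le_sup_left (le_sup_of_le_right ?_)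
  refine iSup₂_le fun e he => le_iSup_of_le e (le_iSup_of_le (by omega) le_rfl)

/-- Fibers of `argmax` of measurable functions over a list are measurable. -/
lemma argmax_fiber_meas {α : Type} {m : MeasurableSpace α} (l : List G.E) (v : G.E → α → ℝ)
    (hv : ∀ e ∈ l, @Measurable α ℝ m _ (v e)) (o : Option G.E) :
    MeasurableSet[m] {a | l.argmax (fun e => v e a) = o} := by
  classical
  cases o with
  | none =>
    by_cases hl : l = []
    · have : {a : α | l.argmax (fun e => v e a) = none} = Set.univ := by
        ext a; simp [List.argmax_eq_none, hl]
      rw [this]; exact MeasurableSet.univ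
    · have : {a : α | l.argmax (fun e => v e a) = none} = ∅ := by
        ext a; simp [List.argmax_eq_none, hl]
      rw [this]; exact MeasurableSet.empty
  | some e =>
    by_cases hel : e ∈ l
    · have hset : {a | l.argmax (fun e' => v e' a) = some e} =
          ⋂ b : G.E, ({a | b ∈ l → v b a ≤ v e a} ∩
            {a | b ∈ l → l.idxOf b < l.idxOf e → v b a < v e a}) := by
        ext a
        simp only [Set.mem_setOf_eq, Set.mem_iInter, Set.mem_inter_iff,
          List.argmax_eq_some_iff, hel, true_and]
        constructor
        · rintro ⟨h1, h2⟩ b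
          refine ⟨h1 b, fun hb hidx => ?_⟩
          by_contra hle
          push_neg at hle
          have := h2 b hb hle
          omega
        · intro h
          refine ⟨fun b hb => (h b).1 hb, fun b hb hle => ?_⟩
          by_contra hidx
          push_neg at hidx
          have := (h b).2 hb hidx
          linarith
      rw [hset]
      refine MeasurableSet.iInter fun b => MeasurableSet.inter ?_ ?_
      · by_cases hb : b ∈ l
        · have : {a | b ∈ l → v b a ≤ v e a} = {a | v b a ≤ v e a} := by ext a; simp [hb]
          rw [this]; exact measurableSet_le (hv b hb) (hv e hel)
        · have : {a : α | b ∈ l → v b a ≤ v e a} = Set.univ := by ext a; simp [hb]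
          rw [this]; exact MeasurableSet.univ
      · by_cases hb : b ∈ l
        · by_cases hidx : l.idxOf b < l.idxOf e
          · have : {a | b ∈ l → l.idxOf b < l.idxOf e → v b a < v e a} =
                {a | v b a < v e a} := by ext a; simp [hb, hidx]
            rw [this]; exact measurableSet_lt (hv b hb) (hv e hel)
          · have : {a : α | b ∈ l → l.idxOf b < l.idxOf e → v b a < v e a} =
                Set.univ := by ext a; simp [hb, hidx]
            rw [this]; exact MeasurableSet.univ
        · have : {a : α | b ∈ l → l.idxOf b < l.idxOf e → v b a < v e a} =
              Set.univ := by ext a; simp [hb]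
          rw [this]; exact MeasurableSet.univ
    · have : {a | l.argmax (fun e' => v e' a) = some e} = ∅ := by
        ext a
        simp only [Set.mem_setOf_eq, List.argmax_eq_some_iff, Set.mem_empty_iff_false, iff_false]
        intro h
        exact hel h.1
      rw [this]; exact MeasurableSet.empty

lemma pick_fiber_M1 (μ : Measure Ω) (W : G.E → Ω → ℝ) (j : ℕ) (o : Option G.E) :
    MeasurableSet[M1 G W j] {ω : Ω | pick G μ W j ω = o} := by
  refine argmax_fiber_meas G (Edges G j).toList (fun e ω => W e ω - cE G μ W e) ?_ o
  intro e he
  rw [Finset.mem_toList, Edges, Finset.mem_filter] at he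
  exact (measurable_W_M1 G he.2).sub measurable_const

lemma pick_fiber_info (μ : Measure Ω) (W : G.E → Ω → ℝ) {j i : ℕ} (hji : j ≤ i) (o : Option G.E) :
    MeasurableSet[G.infoAt W i] {ω' : Ω × ℝ | pick G μ W j ω'.1 = o} := by
  refine argmax_fiber_meas G (Edges G j).toList (fun e (a : Ω × ℝ) => W e a.1 - cE G μ W e) ?_ o
  intro e he
  rw [Finset.mem_toList, Edges, Finset.mem_filter] at he
  exact (measurable_W_info G (he.2 ▸ hji)).sub measurable_const

lemma meas_top_of_fibers {α β : Type} [Countable β] {m : MeasurableSpace α} (f : α → β)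
    (h : ∀ b, MeasurableSet[m] (f ⁻¹' {b})) : @Measurable α β m ⊤ f := by
  intro s _
  have : f ⁻¹' s = ⋃ b ∈ s, f ⁻¹' {b} := by ext a; simp
  rw [this]
  exact MeasurableSet.biUnion (Set.to_countable s) fun b _ => h b

lemma meas_of_factor {α β V : Type} [Countable β] [Countable V] {m : MeasurableSpace α}
    (tup : α → V) (htup : ∀ v, MeasurableSet[m] (tup ⁻¹' {v}))
    (f : α → β) (hf : ∀ a b, tup a = tup b → f a = f b) : @Measurable α β m ⊤ f := by
  apply meas_top_of_fibers
  intro b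
  have : f ⁻¹' {b} = ⋃ v ∈ {v : V | ∃ a, tup a = v ∧ f a = b}, tup ⁻¹' {v} := by
    ext a
    simp only [Set.mem_preimage, Set.mem_singleton_iff, Set.mem_iUnion, Set.mem_setOf_eq]
    constructor
    · intro hb
      exact ⟨tup a, ⟨a, rfl, hb⟩, rfl⟩
    · rintro ⟨v, ⟨a', ha', hb⟩, hv⟩
      rw [← hb]
      exact hf a a' (hv.trans ha'.symm)
  rw [this]
  exact MeasurableSet.biUnion (Set.to_countable _) fun v _ => htup v

end W1
namespace W1

open Finset MeasureTheory ProbabilityTheory NNReal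

variable (G : DAGInst) {Ω : Type} [MeasurableSpace Ω]

/-- Focal structure hypothesis. -/
def Focal : Prop := ∀ j, j < G.n → ∃ e, G.src e = j ∧ G.dst e = j + 1

lemma pkOk_pick (μ : Measure Ω) (W : G.E → Ω → ℝ) (hfo : Focal G) (ω : Ω) :
    PkOk G (fun j => pick G μ W j ω) := by
  intro j hj
  obtain ⟨f, hf, _⟩ := hfo j hj
  obtain ⟨e, he⟩ := pick_isSome G ω hf
  exact ⟨e, he, pick_src G he⟩

/-- The algorithm. -/
noncomputable def Alg (μ : Measure Ω) (W : G.E → Ω → ℝ) (ω' : Ω × ℝ) : List G.E :=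
  gPath G (fun j => pick G μ W j ω'.1) 0

lemma Alg_isOnline (μ : Measure Ω) (W : G.E → Ω → ℝ) (hfo : Focal G) :
    G.IsOnlineAlg W (Alg G μ W) := by
  constructor
  · intro ω'
    exact gPath_isPath G (pkOk_pick G μ W hfo ω'.1)
  · intro i hi
    refine meas_of_factor (V := Fin (i+1) → Option G.E)
      (fun ω' => fun l => pick G μ W l.1 ω'.1) ?_ _ ?_
    · intro v
      have : (fun (ω' : Ω × ℝ) => fun (l : Fin (i+1)) => pick G μ W l.1 ω'.1) ⁻¹' {v} =
          ⋂ l : Fin (i+1), {ω' : Ω × ℝ | pick G μ W l.1 ω'.1 = v l} := by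
        ext ω'
        simp only [Set.mem_preimage, Set.mem_singleton_iff, Set.mem_iInter, Set.mem_setOf_eq,
          funext_iff]
      rw [this]
      exact MeasurableSet.iInter fun l => pick_fiber_info G μ W (by omega) (v l)
    · intro a b hab
      refine takeOut_gPath_agree G (pkOk_pick G μ W hfo a.1) (pkOk_pick G μ W hfo b.1)
        G.n 0 i (by omega) (by omega) ?_
      intro l hl0 hli
      exact congrFun hab ⟨l, by omega⟩

end W1
namespace W1

open Finset MeasureTheory ProbabilityTheory NNReal

variable (G : DAGInst) {Ω : Type} [MeasurableSpace Ω] (μ : Measure Ω) (W : G.E → Ω → ℝ)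

lemma thr_nonneg (j : ℕ) : 0 ≤ thr G μ W j := by
  rw [thr]
  split
  · exact integral_nonneg fun ω => NNReal.coe_nonneg _
  · exact le_rfl

lemma cE_nonneg (e : G.E) : 0 ≤ cE G μ W e :=
  Finset.sum_nonneg fun l _ => thr_nonneg G μ W l

lemma cE_focal {e : G.E} (h : G.dst e = G.src e + 1) : cE G μ W e = 0 := by
  rw [cE, h]
  simp

lemma Xf_nonneg (j : ℕ) (ω : Ω) : 0 ≤ Xf G μ W j ω := NNReal.coe_nonneg _

lemma le_Xf {j : ℕ} {ω : Ω} {e : G.E} (h : G.src e = j) :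
    W e ω - cE G μ W e ≤ Xf G μ W j ω := by
  refine le_trans (Real.le_coe_toNNReal _) ?_
  rw [Xf]
  exact_mod_cast Finset.le_sup (f := fun e => (W e ω - cE G μ W e).toNNReal)
    (by rw [Edges, Finset.mem_filter]; exact ⟨Finset.mem_univ _, h⟩)

lemma pick_val_nonneg (hfo : Focal G) (hWnn : ∀ e ω, 0 ≤ W e ω) {j : ℕ} {ω : Ω} {e₀ : G.E}
    (hj : j < G.n) (h₀ : pick G μ W j ω = some e₀) : 0 ≤ W e₀ ω - cE G μ W e₀ := by
  obtain ⟨f, hfs, hfd⟩ := hfo j hj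
  have h1 := pick_max G h₀ hfs
  have h2 : cE G μ W f = 0 := cE_focal G μ W (by omega)
  have := hWnn f ω
  linarith

lemma Xf_le (hfo : Focal G) (hWnn : ∀ e ω, 0 ≤ W e ω) {j : ℕ} {ω : Ω} {e₀ : G.E}
    (hj : j < G.n) (h₀ : pick G μ W j ω = some e₀) :
    Xf G μ W j ω ≤ W e₀ ω - cE G μ W e₀ := by
  rw [Xf, ← Real.coe_toNNReal _ (pick_val_nonneg G μ W hfo hWnn hj h₀)]
  refine NNReal.coe_le_coe.mpr (Finset.sup_le fun e he => ?_)
  rw [Edges, Finset.mem_filter] at he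
  exact Real.toNNReal_mono (pick_max G h₀ he.2)

lemma meas_sup_nnreal {α : Type} {m : MeasurableSpace α} (s : Finset G.E) (f : G.E → α → ℝ≥0)
    (hf : ∀ e ∈ s, @Measurable α ℝ≥0 m _ (f e)) :
    @Measurable α ℝ≥0 m _ (fun a => s.sup fun e => f e a) := by
  classical
  induction s using Finset.induction_on with
  | empty => simpa using @measurable_const ℝ≥0 α _ m 0
  | @insert a s ha ih =>
    simp only [Finset.sup_insert]
    exact Measurable.sup (hf a (Finset.mem_insert_self a s))
      (ih fun e he => hf e (Finset.mem_insert_of_mem he))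

lemma Xf_meas_M1 (j : ℕ) : @Measurable Ω ℝ (M1 G W j) _ (Xf G μ W j) := by
  refine Measurable.comp ?_ (meas_sup_nnreal G (Edges G j)
    (fun e ω => (W e ω - cE G μ W e).toNNReal) ?_)
  · exact measurable_coe_nnreal_real
  · intro e he
    rw [Edges, Finset.mem_filter] at he
    exact measurable_real_toNNReal.comp ((measurable_W_M1 G he.2).sub measurable_const)

lemma M1_le_ambient (hW : ∀ e, Measurable (W e)) (j : ℕ) :
    M1 G W j ≤ ‹MeasurableSpace Ω› :=
  iSup₂_le fun e _ => (hW e).comap_le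

lemma Xf_meas (hW : ∀ e, Measurable (W e)) (j : ℕ) : Measurable (Xf G μ W j) :=
  (Xf_meas_M1 G μ W j).mono (M1_le_ambient G W hW j) le_rfl

lemma Xf_le_sum (hWnn : ∀ e ω, 0 ≤ W e ω) (j : ℕ) (ω : Ω) :
    Xf G μ W j ω ≤ ∑ e, W e ω := by
  have h1 : (0:ℝ) ≤ ∑ e, W e ω := Finset.sum_nonneg fun e _ => hWnn e ω
  rw [Xf, ← Real.coe_toNNReal _ h1]
  refine NNReal.coe_le_coe.mpr (Finset.sup_le fun e he => ?_)
  refine Real.toNNReal_mono ?_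
  have h2 := cE_nonneg G μ W e
  have h3 : W e ω ≤ ∑ e', W e' ω :=
    Finset.single_le_sum (f := fun e' => W e' ω) (fun e' _ => hWnn e' ω) (Finset.mem_univ e)
  linarith

lemma Xf_integrable (hW : ∀ e, Measurable (W e)) (hWnn : ∀ e ω, 0 ≤ W e ω)
    (hWint : ∀ e, Integrable (W e) μ) (j : ℕ) : Integrable (Xf G μ W j) μ := by
  refine Integrable.mono' (integrable_finset_sum Finset.univ fun e _ => hWint e)
    (Xf_meas G μ W hW j).aestronglyMeasurable (ae_of_all _ fun ω => ?_)
  rw [Real.norm_of_nonneg (Xf_nonneg G μ W j ω)]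
  exact Xf_le_sum G μ W hWnn j ω

/-- The algorithm's value from node `k`. -/
noncomputable def AValf (k : ℕ) (ω : Ω) : ℝ :=
  G.pathValue (gPath G (fun j => pick G μ W j ω) k) (fun e => W e ω)

/-- The event that the pick at node `j` equals `e`. -/
def SetPick (j : ℕ) (e : G.E) : Set Ω := {ω | pick G μ W j ω = some e}

/-- Sum of thresholds from `k` on. -/
noncomputable def Phi (k : ℕ) : ℝ := ∑ l ∈ Finset.Ico k G.n, thr G μ W l

lemma Phi_nonneg (k : ℕ) : 0 ≤ Phi G μ W k :=
  Finset.sum_nonneg fun l _ => thr_nonneg G μ W l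

lemma AVal_decomp (hfo : Focal G) {k : ℕ} (hk : k < G.n) (ω : Ω) :
    AValf G μ W k ω = ∑ e ∈ Edges G k,
      Set.indicator (SetPick G μ W k e) (fun ω => W e ω + AValf G μ W (G.dst e) ω) ω := by
  obtain ⟨e₀, h₀, hsrc⟩ := pkOk_pick G μ W hfo ω k hk
  rw [Finset.sum_eq_single_of_mem e₀
    (by rw [Edges, Finset.mem_filter]; exact ⟨Finset.mem_univ _, hsrc⟩)]
  · rw [Set.indicator_of_mem (by exact h₀ : ω ∈ SetPick G μ W k e₀)]
    exact pathValue_gPath_cons G hk h₀ hsrc _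
  · intro e he hne
    refine Set.indicator_of_notMem ?_ _
    intro hmem
    have hmem' : pick G μ W k ω = some e := hmem
    have h₀' : pick G μ W k ω = some e₀ := h₀
    rw [h₀'] at hmem'
    exact hne (by injection hmem'.symm)

lemma AVal_zero {k : ℕ} (hk : ¬ k < G.n) : AValf G μ W k = fun _ => 0 :=
  funext fun ω => pathValue_gPath_stop G _ hk _

lemma AVal_meas_Mge (hfo : Focal G) :
    ∀ m k, G.n - k ≤ m → @Measurable Ω ℝ (Mge G W k) _ (AValf G μ W k) := by
  intro m
  induction m with
  | zero =>
    intro k hm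
    rw [AVal_zero G μ W (by omega)]
    exact measurable_const
  | succ m ih =>
    intro k hm
    by_cases hk : k < G.n
    · rw [show AValf G μ W k = fun ω => ∑ e ∈ Edges G k,
        Set.indicator (SetPick G μ W k e) (fun ω => W e ω + AValf G μ W (G.dst e) ω) ω from
        funext (AVal_decomp G μ W hfo hk)]
      refine Finset.measurable_sum _ fun e he => ?_
      rw [Edges, Finset.mem_filter] at he
      have hlt : k < G.dst e := he.2 ▸ G.src_lt_dst e
      refine Measurable.indicator ?_ ?_
      · refine Measurable.add (measurable_W_Mge G (le_of_eq he.2.symm)) ?_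
        exact (ih (G.dst e) (by omega)).mono (Mge_mono G (by omega)) le_rfl
      · exact M1_le_Mge G le_rfl _ (pick_fiber_M1 G μ W k (some e))
    · rw [AVal_zero G μ W hk]
      exact measurable_const

lemma AVal_meas (hW : ∀ e, Measurable (W e)) (hfo : Focal G) (k : ℕ) :
    Measurable (AValf G μ W k) := by
  refine (AVal_meas_Mge G μ W hfo (G.n - k) k le_rfl).mono ?_ le_rfl
  exact iSup₂_le fun e _ => (hW e).comap_le

lemma AVal_bounds (hfo : Focal G) (hWnn : ∀ e ω, 0 ≤ W e ω) (k : ℕ) (ω : Ω) :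
    0 ≤ AValf G μ W k ω ∧ AValf G μ W k ω ≤ ∑ e, W e ω := by
  obtain ⟨h0, h1⟩ := pathValue_gPath_bounds G (pkOk_pick G μ W hfo ω) (fun e => W e ω)
    (fun e => hWnn e ω) (G.n - k) k le_rfl
  refine ⟨h0, le_trans h1 ?_⟩
  exact Finset.sum_le_sum_of_subset_of_nonneg (Finset.filter_subset _ _)
    fun e _ _ => hWnn e ω

lemma AVal_integrable (hW : ∀ e, Measurable (W e)) (hfo : Focal G)
    (hWnn : ∀ e ω, 0 ≤ W e ω) (hWint : ∀ e, Integrable (W e) μ) (k : ℕ) :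
    Integrable (AValf G μ W k) μ := by
  refine Integrable.mono' (integrable_finset_sum Finset.univ fun e _ => hWint e)
    (AVal_meas G μ W hW hfo k).aestronglyMeasurable (ae_of_all _ fun ω => ?_)
  obtain ⟨h0, h1⟩ := AVal_bounds G μ W hfo hWnn k ω
  rw [Real.norm_of_nonneg h0]
  exact h1

lemma indep_mono {m1 m2 m1' m2' : MeasurableSpace Ω} (h : Indep m1 m2 μ)
    (h1 : m1' ≤ m1) (h2 : m2' ≤ m2) : Indep m1' m2' μ := by
  rw [Indep_iff] at h ⊢
  intro t1 t2 ht1 ht2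
  exact h t1 t2 (h1 _ ht1) (h2 _ ht2)

lemma indep_M1_Mge (hW : ∀ e, Measurable (W e)) (hindep : G.IndepWeights W μ)
    {j k : ℕ} (hjk : j < k) : Indep (M1 G W j) (Mge G W k) μ := by
  set f : ∀ i : ℕ, Ω → ({e : G.E // G.src e = i} → ℝ) :=
    fun i ω => fun e => W e.1 ω with hf
  have hi : iIndep (fun i => MeasurableSpace.comap (f i) MeasurableSpace.pi) μ :=
    hindep.iIndep
  have h_le : ∀ i, MeasurableSpace.comap (f i) MeasurableSpace.pi ≤ ‹MeasurableSpace Ω› :=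
    fun i => (measurable_pi_lambda (f i) (fun (e : {e : G.E // G.src e = i}) => hW e.1)).comap_le
  have hdisj : Disjoint ({j} : Set ℕ) {i | k ≤ i} := by
    rw [Set.disjoint_left]
    rintro i rfl hi2
    exact absurd hi2 (by simpa using hjk)
  have hmain := indep_iSup_of_disjoint h_le hi hdisj
  refine indep_mono μ hmain ?_ ?_
  · refine iSup₂_le fun e he => ?_
    have hcomp : W e = (fun v : {e' : G.E // G.src e' = j} → ℝ => v ⟨e, he⟩) ∘ f j := rfl
    calc MeasurableSpace.comap (W e) inferInstance
        ≤ MeasurableSpace.comap (f j) MeasurableSpace.pi := by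
          rw [hcomp, ← MeasurableSpace.comap_comp]
          exact MeasurableSpace.comap_mono (measurable_pi_apply _).comap_le
      _ ≤ _ := le_iSup₂_of_le j (Set.mem_singleton j) le_rfl
  · refine iSup₂_le fun e he => ?_
    have hcomp : W e = (fun v : {e' : G.E // G.src e' = G.src e} → ℝ => v ⟨e, rfl⟩) ∘
        f (G.src e) := rfl
    calc MeasurableSpace.comap (W e) inferInstance
        ≤ MeasurableSpace.comap (f (G.src e)) MeasurableSpace.pi := by
          rw [hcomp, ← MeasurableSpace.comap_comp]
          exact MeasurableSpace.comap_mono (measurable_pi_apply _).comap_le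
      _ ≤ _ := le_iSup₂_of_le (G.src e) he le_rfl

lemma indepFun_of_meas {m1 m2 : MeasurableSpace Ω} {X Y : Ω → ℝ} (h : Indep m1 m2 μ)
    (hX : @Measurable Ω ℝ m1 _ X) (hY : @Measurable Ω ℝ m2 _ Y) : IndepFun X Y μ := by
  rw [IndepFun_iff_Indep, Indep_iff]
  rw [Indep_iff] at h
  intro t1 t2 ht1 ht2
  exact h t1 t2 (hX.comap_le _ ht1) (hY.comap_le _ ht2)

lemma Phi_split {k d : ℕ} (h1 : k ≤ d) (h2 : d ≤ G.n) :
    Phi G μ W k = (∑ l ∈ Finset.Ico k d, thr G μ W l) + Phi G μ W d := by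
  rw [Phi, Phi, Finset.sum_Ico_consecutive _ h1 h2]

lemma AVal_int_ge [IsProbabilityMeasure μ] (hW : ∀ e, Measurable (W e)) (hfo : Focal G)
    (hWnn : ∀ e ω, 0 ≤ W e ω) (hWint : ∀ e, Integrable (W e) μ)
    (hindep : G.IndepWeights W μ) :
    ∀ m k, G.n - k ≤ m → Phi G μ W k ≤ ∫ ω, AValf G μ W k ω ∂μ := by
  intro m
  induction m with
  | zero =>
    intro k hm
    rw [AVal_zero G μ W (by omega), Phi, Finset.Ico_eq_empty (by omega)]
    simp
  | succ m ih =>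
    intro k hm
    by_cases hk : k < G.n
    · have hmemE : ∀ e ∈ Edges G k, G.src e = k := by
        intro e he
        rw [Edges, Finset.mem_filter] at he
        exact he.2
      have hpickmeas : ∀ e, MeasurableSet (SetPick G μ W k e) :=
        fun e => M1_le_ambient G W hW k _ (pick_fiber_M1 G μ W k (some e))
      -- integrability of pieces
      have hint1 : ∀ e, Integrable (Set.indicator (SetPick G μ W k e) (W e)) μ :=
        fun e => (hWint e).indicator (hpickmeas e)
      have hint2 : ∀ e, Integrable
          (Set.indicator (SetPick G μ W k e) (fun _ => (1:ℝ))) μ :=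
        fun e => (integrable_const 1).indicator (hpickmeas e)
      have hintA : ∀ d, Integrable (AValf G μ W d) μ :=
        AVal_integrable G μ W hW hfo hWnn hWint
      have key : ∀ e ∈ Edges G k,
          (∫ ω, Set.indicator (SetPick G μ W k e) (W e) ω ∂μ) +
            (∫ ω, Set.indicator (SetPick G μ W k e) (fun _ => (1:ℝ)) ω ∂μ) *
              Phi G μ W (G.dst e) ≤
          ∫ ω, Set.indicator (SetPick G μ W k e)
            (fun ω => W e ω + AValf G μ W (G.dst e) ω) ω ∂μ := by
        intro e he
        have hsrc := hmemE e he
        have hlt : k < G.dst e := hsrc ▸ G.src_lt_dst e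
        have hsplit : Set.indicator (SetPick G μ W k e)
            (fun ω => W e ω + AValf G μ W (G.dst e) ω) = fun ω =>
              Set.indicator (SetPick G μ W k e) (W e) ω +
              Set.indicator (SetPick G μ W k e) (AValf G μ W (G.dst e)) ω := by
          funext ω
          by_cases hmem : ω ∈ SetPick G μ W k e
          · simp [Set.indicator_of_mem hmem]
          · simp [Set.indicator_of_notMem hmem]
        have hindic : Set.indicator (SetPick G μ W k e) (AValf G μ W (G.dst e)) =
            (Set.indicator (SetPick G μ W k e) (fun _ => (1:ℝ))) * AValf G μ W (G.dst e) := by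
          funext ω
          by_cases hmem : ω ∈ SetPick G μ W k e
          · simp [Set.indicator_of_mem hmem]
          · simp [Set.indicator_of_notMem hmem]
        have hXY : IndepFun (Set.indicator (SetPick G μ W k e) (fun _ => (1:ℝ)))
            (AValf G μ W (G.dst e)) μ := by
          refine indepFun_of_meas μ (indep_M1_Mge G μ W hW hindep hlt) ?_ ?_
          · exact measurable_const.indicator (pick_fiber_M1 G μ W k (some e))
          · exact AVal_meas_Mge G μ W hfo (G.n - G.dst e) (G.dst e) le_rfl
        rw [hsplit, integral_add (hint1 e) ((hintA (G.dst e)).indicator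
          (hpickmeas e))]
        have h2 : ∫ ω, Set.indicator (SetPick G μ W k e) (AValf G μ W (G.dst e)) ω ∂μ =
            (∫ ω, Set.indicator (SetPick G μ W k e) (fun _ => (1:ℝ)) ω ∂μ) *
              ∫ ω, AValf G μ W (G.dst e) ω ∂μ := by
          rw [hindic]
          exact hXY.integral_mul_eq_mul_integral (hint2 e).aestronglyMeasurable
            (hintA (G.dst e)).aestronglyMeasurable
        rw [h2]
        have hnn : 0 ≤ ∫ ω, Set.indicator (SetPick G μ W k e) (fun _ => (1:ℝ)) ω ∂μ :=
          integral_nonneg fun ω => Set.indicator_nonneg (fun _ _ => zero_le_one) ω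
        have := ih (G.dst e) (by omega)
        nlinarith [this, hnn]
      have hintA' : ∀ e ∈ Edges G k, Integrable
          (Set.indicator (SetPick G μ W k e)
            (fun ω => W e ω + AValf G μ W (G.dst e) ω)) μ :=
        fun e _ => ((hWint e).add (hintA (G.dst e))).indicator (hpickmeas e)
      have hdecomp : (∫ ω, AValf G μ W k ω ∂μ) = ∑ e ∈ Edges G k,
          ∫ ω, Set.indicator (SetPick G μ W k e)
            (fun ω => W e ω + AValf G μ W (G.dst e) ω) ω ∂μ := by
        rw [show AValf G μ W k = fun ω => ∑ e ∈ Edges G k, Set.indicator (SetPick G μ W k e)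
            (fun ω => W e ω + AValf G μ W (G.dst e) ω) ω from funext (AVal_decomp G μ W hfo hk)]
        exact integral_finset_sum _ hintA'
      have hconst : ∀ e ∈ Edges G k,
          (∫ ω, Set.indicator (SetPick G μ W k e) (fun _ => (1:ℝ)) ω ∂μ) * Phi G μ W (G.dst e)
          = ∫ ω, Set.indicator (SetPick G μ W k e) (fun _ => Phi G μ W (G.dst e)) ω ∂μ := by
        intro e _
        rw [← integral_mul_const]
        congr 1
        funext ω
        by_cases hmem : ω ∈ SetPick G μ W k e
        · simp [Set.indicator_of_mem hmem]
        · simp [Set.indicator_of_notMem hmem]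
      have hlow : ∀ e ∈ Edges G k,
          (∫ ω, (Set.indicator (SetPick G μ W k e) (W e) ω +
            Set.indicator (SetPick G μ W k e) (fun _ => Phi G μ W (G.dst e)) ω) ∂μ) ≤
          ∫ ω, Set.indicator (SetPick G μ W k e)
            (fun ω => W e ω + AValf G μ W (G.dst e) ω) ω ∂μ := by
        intro e he
        rw [integral_add (hint1 e) ((integrable_const _).indicator (hpickmeas e)),
          ← hconst e he]
        exact key e he
      have hsum : (∫ ω, ∑ e ∈ Edges G k, (Set.indicator (SetPick G μ W k e) (W e) ω +
            Set.indicator (SetPick G μ W k e) (fun _ => Phi G μ W (G.dst e)) ω) ∂μ)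
          ≤ ∫ ω, AValf G μ W k ω ∂μ := by
        rw [hdecomp, integral_finset_sum (Edges G k)
          (f := fun e ω => Set.indicator (SetPick G μ W k e) (W e) ω +
            Set.indicator (SetPick G μ W k e) (fun _ => Phi G μ W (G.dst e)) ω)
          (fun e _ => (hint1 e).add ((integrable_const _).indicator (hpickmeas e)))]
        exact Finset.sum_le_sum hlow
      have hpoint : ∀ ω, Xf G μ W k ω + Phi G μ W (k+1) ≤
          ∑ e ∈ Edges G k, (Set.indicator (SetPick G μ W k e) (W e) ω +
            Set.indicator (SetPick G μ W k e) (fun _ => Phi G μ W (G.dst e)) ω) := by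
        intro ω
        obtain ⟨e₀, h₀, hsrc⟩ := pkOk_pick G μ W hfo ω k hk
        have h₀' : pick G μ W k ω = some e₀ := h₀
        have hmem0 : e₀ ∈ Edges G k := by
          rw [Edges, Finset.mem_filter]; exact ⟨Finset.mem_univ _, hsrc⟩
        have hzero : ∀ e ∈ Edges G k, e ≠ e₀ →
            (Set.indicator (SetPick G μ W k e) (W e) ω +
              Set.indicator (SetPick G μ W k e) (fun _ => Phi G μ W (G.dst e)) ω) = 0 := by
          intro e _ hne
          have hnm : ω ∉ SetPick G μ W k e := by
            intro hmem
            have hmem' : pick G μ W k ω = some e := hmem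
            rw [h₀'] at hmem'
            exact hne (by injection hmem' with h; exact h.symm)
          rw [Set.indicator_of_notMem hnm, Set.indicator_of_notMem hnm]; ring
        rw [Finset.sum_eq_single_of_mem e₀ hmem0 hzero]
        have hmm : ω ∈ SetPick G μ W k e₀ := h₀'
        rw [Set.indicator_of_mem hmm, Set.indicator_of_mem hmm]
        have hd1 : k + 1 ≤ G.dst e₀ := by have := hsrc ▸ G.src_lt_dst e₀; omega
        have hsplitPhi : Phi G μ W (k+1) = cE G μ W e₀ + Phi G μ W (G.dst e₀) := by
          rw [Phi_split G μ W hd1 (G.dst_le_n e₀), cE, hsrc]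
        have hXle := Xf_le G μ W hfo hWnn hk h₀'
        rw [hsplitPhi]
        linarith
      have hints : Integrable (fun ω => ∑ e ∈ Edges G k,
          (Set.indicator (SetPick G μ W k e) (W e) ω +
            Set.indicator (SetPick G μ W k e) (fun _ => Phi G μ W (G.dst e)) ω)) μ :=
        integrable_finset_sum _ (fun e _ => (hint1 e).add
          ((integrable_const _).indicator (hpickmeas e)))
      have hXc : Integrable (fun ω => Xf G μ W k ω + Phi G μ W (k+1)) μ :=
        (Xf_integrable G μ W hW hWnn hWint k).add (integrable_const _)
      have hm := integral_mono hXc hints hpoint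
      have hXint : (∫ ω, (Xf G μ W k ω + Phi G μ W (k+1)) ∂μ) =
          thr G μ W k + Phi G μ W (k+1) := by
        rw [integral_add (Xf_integrable G μ W hW hWnn hWint k) (integrable_const _),
          integral_const, ← thr_eq G μ W hk]
        simp [measure_univ]
      have hPhik : Phi G μ W k = thr G μ W k + Phi G μ W (k+1) := by
        rw [Phi, Phi, Finset.sum_eq_sum_Ico_succ_bot hk]
      linarith [hsum, hm]
    · rw [AVal_zero G μ W hk, Phi, Finset.Ico_eq_empty (by omega)]
      simp

end W1
namespace W1

open Finset MeasureTheory ProbabilityTheory NNReal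

variable (G : DAGInst) {Ω : Type} [MeasurableSpace Ω] (μ : Measure Ω) (W : G.E → Ω → ℝ)

lemma path_pairwise {p : List G.E} (hc : List.Chain' (fun e f => G.dst e = G.src f) p) :
    List.Pairwise (fun a b => G.dst a ≤ G.src b) p := by
  letI : IsTrans G.E (fun a b => G.dst a ≤ G.src b) :=
    ⟨fun a b c hab hbc => by have := G.src_lt_dst b; omega⟩
  exact List.isChain_iff_pairwise.mp (hc.imp fun _ _ hab => le_of_eq hab)

lemma focal_of {P₀ : List G.E} (hP₀ : G.IsPath P₀) (hfocal : ∀ v ≤ G.n, G.Visits P₀ v) :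
    Focal G := by
  intro j hj
  have hv1 := hfocal (j+1) (by omega)
  rcases hv1 with h0 | ⟨e, hep, hde⟩
  · omega
  refine ⟨e, ?_, hde⟩
  have hsle : G.src e ≤ j := by have := G.src_lt_dst e; omega
  rcases Nat.eq_or_lt_of_le hsle with heq | hlt
  · exact heq
  exfalso
  have hvj := hfocal j (by omega)
  rcases hvj with rfl | ⟨e', he'p, hde'⟩
  · omega
  have hpw : List.Pairwise (fun a b => G.dst a ≤ G.src b ∨ G.dst b ≤ G.src a) P₀ :=
    (path_pairwise G hP₀.2.2).imp Or.inl
  have hneq : e' ≠ e := by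
    intro h
    rw [h] at hde'
    omega
  have hsym : Symmetric (fun a b : G.E => G.dst a ≤ G.src b ∨ G.dst b ≤ G.src a) :=
    fun a b h => h.symm
  rcases (haveI : Std.Symm (fun a b : G.E => G.dst a ≤ G.src b ∨ G.dst b ≤ G.src a) :=
      ⟨fun a b h => hsym h⟩; hpw.forall he'p hep hneq) with h | h
  · omega
  · have := G.src_lt_dst e'
    omega

lemma listsum_le {h : ℕ → ℝ} (hh : ∀ l, 0 ≤ h l) (f : G.E → ℝ) :
    ∀ (p : List G.E) (m : ℕ), List.Pairwise (fun a b => G.dst a ≤ G.src b) p →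
      (∀ e ∈ p, m ≤ G.src e) →
      (∀ e ∈ p, f e ≤ ∑ l ∈ Finset.Ico (G.src e) (G.dst e), h l) →
      (p.map f).sum ≤ ∑ l ∈ Finset.Ico m G.n, h l := by
  intro p
  induction p with
  | nil =>
    intro m _ _ _
    simpa using Finset.sum_nonneg fun l _ => hh l
  | cons e p' ih =>
    intro m hpw hm hf
    rw [List.pairwise_cons] at hpw
    have hsrc : m ≤ G.src e := hm e (List.mem_cons_self)
    have hsd := G.src_lt_dst e
    have hdn := G.dst_le_n e
    have hrest := ih (G.dst e) hpw.2 (fun e' he' => hpw.1 e' he')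
      (fun e' he' => hf e' (List.mem_cons_of_mem e he'))
    have hfe := hf e (List.mem_cons_self)
    have hsplit1 : ∑ l ∈ Finset.Ico m G.n, h l =
        (∑ l ∈ Finset.Ico m (G.src e), h l) + ∑ l ∈ Finset.Ico (G.src e) G.n, h l := by
      rw [Finset.sum_Ico_consecutive _ hsrc (by omega)]
    have hsplit2 : ∑ l ∈ Finset.Ico (G.src e) G.n, h l =
        (∑ l ∈ Finset.Ico (G.src e) (G.dst e), h l) + ∑ l ∈ Finset.Ico (G.dst e) G.n, h l := by
      rw [Finset.sum_Ico_consecutive _ (by omega) (by omega)]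
    have hpos : 0 ≤ ∑ l ∈ Finset.Ico m (G.src e), h l := Finset.sum_nonneg fun l _ => hh l
    simp only [List.map_cons, List.sum_cons]
    rw [hsplit1, hsplit2]
    linarith

lemma listsum_le_add (f g h : G.E → ℝ) :
    ∀ (p : List G.E), (∀ e ∈ p, f e ≤ g e + h e) →
      (p.map f).sum ≤ (p.map g).sum + (p.map h).sum := by
  intro p
  induction p with
  | nil => simp
  | cons e p' ih =>
    intro hp
    simp only [List.map_cons, List.sum_cons]
    have h1 := hp e (List.mem_cons_self)
    have h2 := ih fun e' he' => hp e' (List.mem_cons_of_mem e he')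
    linarith

lemma pathValue_le (ω : Ω) {p : List G.E} (hp : G.IsPath p) (hWnn : ∀ e ω, 0 ≤ W e ω) :
    G.pathValue p (fun e => W e ω) ≤
      (∑ l ∈ Finset.Ico 0 G.n, thr G μ W l) + ∑ l ∈ Finset.Ico 0 G.n, Xf G μ W l ω := by
  have hpw := path_pairwise G hp.2.2
  have h1 : (p.map (fun e => cE G μ W e)).sum ≤ ∑ l ∈ Finset.Ico 0 G.n, thr G μ W l := by
    refine listsum_le G (thr_nonneg G μ W) _ p 0 hpw (fun e _ => Nat.zero_le _) ?_
    intro e _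
    rw [cE]
    refine Finset.sum_le_sum_of_subset_of_nonneg
      (Finset.Ico_subset_Ico (by omega) le_rfl) fun l _ _ => thr_nonneg G μ W l
  have h2 : (p.map (fun e => ((W e ω - cE G μ W e).toNNReal : ℝ))).sum ≤
      ∑ l ∈ Finset.Ico 0 G.n, Xf G μ W l ω := by
    refine listsum_le G (fun l => Xf_nonneg G μ W l ω) _ p 0 hpw (fun e _ => Nat.zero_le _) ?_
    intro e _
    have hx : ((W e ω - cE G μ W e).toNNReal : ℝ) ≤ Xf G μ W (G.src e) ω := by
      rw [Xf]
      exact_mod_cast Finset.le_sup (f := fun e' => (W e' ω - cE G μ W e').toNNReal)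
        (by rw [Edges, Finset.mem_filter]; exact ⟨Finset.mem_univ _, rfl⟩)
    refine le_trans hx ?_
    refine Finset.single_le_sum (f := fun l => Xf G μ W l ω)
      (fun l _ => Xf_nonneg G μ W l ω) ?_
    rw [Finset.mem_Ico]
    exact ⟨le_rfl, G.src_lt_dst e⟩
  have h3 : G.pathValue p (fun e => W e ω) ≤ (p.map (fun e => cE G μ W e)).sum +
      (p.map (fun e => ((W e ω - cE G μ W e).toNNReal : ℝ))).sum := by
    refine listsum_le_add G _ _ _ p ?_
    intro e _
    have := Real.le_coe_toNNReal (W e ω - cE G μ W e)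
    linarith
  rw [DAGInst.pathValue] at h3 ⊢
  linarith

lemma OPT_le (ω : Ω) {P₀ : List G.E} (hP₀ : G.IsPath P₀) (hWnn : ∀ e ω, 0 ≤ W e ω) :
    G.OPTval W ω ≤
      (∑ l ∈ Finset.Ico 0 G.n, thr G μ W l) + ∑ l ∈ Finset.Ico 0 G.n, Xf G μ W l ω := by
  refine csSup_le ⟨G.pathValue P₀ fun e => W e ω, P₀, hP₀, rfl⟩ ?_
  rintro x ⟨p, hp, rfl⟩
  exact pathValue_le G μ W ω hp hWnn

lemma OPT_nonneg (ω : Ω) {P₀ : List G.E} (hP₀ : G.IsPath P₀) (hWnn : ∀ e ω, 0 ≤ W e ω)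
    (hb : BddAbove {x | ∃ p, G.IsPath p ∧ x = G.pathValue p fun e => W e ω}) :
    0 ≤ G.OPTval W ω := by
  have hmem : G.pathValue P₀ (fun e => W e ω) ∈
      {x | ∃ p, G.IsPath p ∧ x = G.pathValue p fun e => W e ω} := ⟨P₀, hP₀, rfl⟩
  refine le_trans ?_ (le_csSup hb hmem)
  rw [DAGInst.pathValue]
  refine List.sum_nonneg ?_
  intro x hx
  obtain ⟨e, _, rfl⟩ := List.mem_map.mp hx
  exact hWnn e ω

end W1
/-- **Theorem 3.1** (width-1 prophet inequality). For every DAG instance of width 1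
(i.e., possessing a focal `s,t`-path `P₀` that visits every node), there is an online
algorithm `A` with `E[Σ_{e ∈ A} W_e] ≥ (1/2)·E[OPT]`. -/
theorem width1_prophet_inequality
    (G : DAGInst) {Ω : Type} [MeasurableSpace Ω]
    (μ : Measure Ω) [IsProbabilityMeasure μ] (W : G.E → Ω → ℝ)
    (hWmeas : ∀ e, Measurable (W e)) (hWnn : ∀ e ω, 0 ≤ W e ω)
    (hWint : ∀ e, Integrable (W e) μ) (hindep : G.IndepWeights W μ)
    (P₀ : List G.E) (hP₀ : G.IsPath P₀) (hfocal : ∀ v ≤ G.n, G.Visits P₀ v) :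
    ∃ A : Ω × ℝ → List G.E, G.IsOnlineAlg W A ∧
      (1 / 2 : ℝ) * ∫ ω, G.OPTval W ω ∂μ ≤
        ∫ ω', G.pathValue (A ω') (fun e => W e ω'.1) ∂(extMeasure μ) := by
  have hfo : W1.Focal G := W1.focal_of G hP₀ hfocal
  refine ⟨W1.Alg G μ W, W1.Alg_isOnline G μ W hfo, ?_⟩
  haveI hprob : IsProbabilityMeasure (MeasureTheory.volume.restrict (Set.Icc (0:ℝ) 1)) := by
    constructor
    rw [Measure.restrict_apply_univ, Real.volume_Icc]
    norm_num
  have hAVmeas : Measurable (W1.AValf G μ W 0) := W1.AVal_meas G μ W hWmeas hfo 0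
  have hmapeq : (extMeasure μ).map Prod.fst = μ := by
    rw [extMeasure]
    exact Measure.fst_prod
  have hrhs : (∫ ω', G.pathValue (W1.Alg G μ W ω') (fun e => W e ω'.1) ∂(extMeasure μ)) =
      ∫ ω, W1.AValf G μ W 0 ω ∂μ := by
    have h1 : ∀ ω' : Ω × ℝ, G.pathValue (W1.Alg G μ W ω') (fun e => W e ω'.1) =
        W1.AValf G μ W 0 ω'.1 := fun ω' => rfl
    calc (∫ ω', G.pathValue (W1.Alg G μ W ω') (fun e => W e ω'.1) ∂(extMeasure μ))
        = ∫ ω', W1.AValf G μ W 0 ω'.1 ∂(extMeasure μ) := by simp only [h1]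
      _ = ∫ ω, W1.AValf G μ W 0 ω ∂((extMeasure μ).map Prod.fst) :=
          (integral_map measurable_fst.aemeasurable
            (by rw [hmapeq]; exact hAVmeas.aestronglyMeasurable)).symm
      _ = ∫ ω, W1.AValf G μ W 0 ω ∂μ := by rw [hmapeq]
  have halg : W1.Phi G μ W 0 ≤ ∫ ω, W1.AValf G μ W 0 ω ∂μ :=
    W1.AVal_int_ge G μ W hWmeas hfo hWnn hWint hindep G.n 0 (by omega)
  have hXint : ∀ l, Integrable (W1.Xf G μ W l) μ :=
    fun l => W1.Xf_integrable G μ W hWmeas hWnn hWint l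
  have hBint : Integrable (fun ω => (∑ l ∈ Finset.Ico 0 G.n, W1.thr G μ W l) +
      ∑ l ∈ Finset.Ico 0 G.n, W1.Xf G μ W l ω) μ :=
    (integrable_const _).add (integrable_finset_sum _ fun l _ => hXint l)
  have hOPTle : ∀ ω, G.OPTval W ω ≤ (∑ l ∈ Finset.Ico 0 G.n, W1.thr G μ W l) +
      ∑ l ∈ Finset.Ico 0 G.n, W1.Xf G μ W l ω :=
    fun ω => W1.OPT_le G μ W ω hP₀ hWnn
  have hOPTnn : ∀ ω, 0 ≤ G.OPTval W ω := by
    intro ω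
    refine W1.OPT_nonneg G W ω hP₀ hWnn ⟨(∑ l ∈ Finset.Ico 0 G.n, W1.thr G μ W l) +
      ∑ l ∈ Finset.Ico 0 G.n, W1.Xf G μ W l ω, ?_⟩
    rintro x ⟨p, hp, rfl⟩
    exact W1.pathValue_le G μ W ω hp hWnn
  have hOPTint : (∫ ω, G.OPTval W ω ∂μ) ≤ 2 * W1.Phi G μ W 0 := by
    have h1 := integral_mono_of_nonneg (Filter.Eventually.of_forall hOPTnn) hBint
      (Filter.Eventually.of_forall hOPTle)
    have h2 : (∫ ω, ((∑ l ∈ Finset.Ico 0 G.n, W1.thr G μ W l) +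
        ∑ l ∈ Finset.Ico 0 G.n, W1.Xf G μ W l ω) ∂μ) = 2 * W1.Phi G μ W 0 := by
      rw [integral_add (integrable_const _) (integrable_finset_sum _ fun l _ => hXint l),
        integral_const, integral_finset_sum _ (fun l _ => hXint l)]
      have h3 : ∀ l ∈ Finset.Ico 0 G.n, (∫ ω, W1.Xf G μ W l ω ∂μ) = W1.thr G μ W l := by
        intro l hl
        rw [Finset.mem_Ico] at hl
        exact (W1.thr_eq G μ W hl.2).symm
      rw [Finset.sum_congr rfl h3]
      rw [W1.Phi]
      simp [measure_univ]
      ring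
    linarith
  rw [hrhs]
  linarith [halg, hOPTint]
end

section
/- Lemma (per-path decomposition, used in the proof of Theorem 4.1). Let G be a DAG instance with deterministic nonnegative weights w : E → ℝ≥0, and let P_1,…,P_k be s,t-paths such that every node is visited by some P_i. Fix an index i and let V_i be the set of nodes visited by P_i. Define the graph G_i on node set V_i whose edge set consists of: (a) every edge e ∈ E with src(e) ∈ V_i and dst(e) ∈ V_i, with weight w_e; and (b) for every edge e ∈ E with src(e) ∈ V_i and dst(e) ∉ V_i, an artificial edge from src(e) to v'(e) with weight w_e, where v'(e) is the smallest element of V_i that is reachable from dst(e) in G (such a node exists since t = n ∈ V_i is reachable from every node of the covered graph). Then for every s,t-path Q of G, the graph G_i contains an s,t-path whose total weight is at least Σ_{e ∈ Q : src(e) ∈ V_i} w_e. -/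
open MeasureTheory ProbabilityTheory

namespace PPD

/-- A walk in `G` from `u` to `v` (inductive formulation). -/
inductive EWalk (G : DAGInst) : ℕ → ℕ → List G.E → Prop
  | nil (u : ℕ) : EWalk G u u List.nil
  | cons (e : G.E) {u v : ℕ} {p : List G.E} (hu : G.src e = u)
      (h : EWalk G (G.dst e) v p) : EWalk G u v (e :: p)

namespace EWalk

variable {G : DAGInst}

theorem nil_eq {u v : ℕ} (h : EWalk G u v List.nil) : u = v := by cases h; rfl

theorem append {u v x : ℕ} {p q : List G.E}
    (h : EWalk G u v p) (h' : EWalk G v x q) : EWalk G u x (p ++ q) := by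
  induction h with
  | nil => exact h'
  | cons e hu h ih => exact .cons e hu (ih h')

theorem append_inv {u x : ℕ} {p q : List G.E} (h : EWalk G u x (p ++ q)) :
    ∃ v, EWalk G u v p ∧ EWalk G v x q := by
  induction p generalizing u with
  | nil => exact ⟨u, .nil u, h⟩
  | cons e p ih =>
    cases h with
    | cons _ hu h =>
      obtain ⟨v, h1, h2⟩ := ih h
      exact ⟨v, .cons e hu h1, h2⟩

theorem head_src {u v : ℕ} {p : List G.E} (h : EWalk G u v p) :
    ∀ f, p.head? = some f → G.src f = u := by
  cases h with
  | nil => intro f hf; simp at hf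
  | cons e hu h => intro f hf; simp at hf; subst hf; exact hu

theorem chain' {u v : ℕ} {p : List G.E} (h : EWalk G u v p) :
    List.Chain' (fun e f => G.dst e = G.src f) p := by
  induction h with
  | nil => exact List.isChain_nil
  | cons e hu h ih =>
    refine List.isChain_cons.mpr ⟨fun b hb => ?_, ih⟩
    exact (h.head_src b hb).symm

theorem getLast_dst : ∀ {p : List G.E} {u v : ℕ}, EWalk G u v p →
    ∀ f, p.getLast? = some f → G.dst f = v := by
  intro p
  induction p with
  | nil => intro u v h f hf; simp at hf
  | cons e p' ih =>
    intro u v h f hf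
    cases h with
    | cons _ hu h' =>
      cases p' with
      | nil => simp at hf; subst hf; exact h'.nil_eq
      | cons g p'' =>
        rw [List.getLast?_cons_cons] at hf
        exact ih h' f hf

theorem reaches {u v : ℕ} {p : List G.E} (h : EWalk G u v p) : G.Reaches u v := by
  cases p with
  | nil => exact Or.inl h.nil_eq
  | cons e p' =>
    refine Or.inr ⟨e :: p', ?_, ?_, h.chain'⟩
    · simp [h.head_src e rfl]
    · obtain ⟨f, hf⟩ : ∃ f, (e :: p').getLast? = some f := by
        cases hh : (e :: p').getLast? with
        | none => rw [List.getLast?_eq_none_iff] at hh; simp at hh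
        | some f => exact ⟨f, rfl⟩
      rw [hf]
      simp [h.getLast_dst f hf]

theorem src_le {u v : ℕ} {p : List G.E} (h : EWalk G u v p) :
    ∀ e ∈ p, u ≤ G.src e := by
  induction h with
  | nil => intro e he; simp at he
  | cons e hu h ih =>
    intro f hf
    rcases List.mem_cons.mp hf with rfl | hf
    · exact hu.ge
    · have h1 := ih f hf
      have h2 := G.src_lt_dst e
      omega

theorem exists_dst : ∀ {p : List G.E} {u v : ℕ}, EWalk G u v p → u ≠ v →
    ∃ f ∈ p, G.dst f = v := by
  intro p
  induction p with
  | nil => intro u v h hne; exact absurd h.nil_eq hne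
  | cons e p' ih =>
    intro u v h hne
    cases h with
    | cons _ hu h' =>
      by_cases hdv : G.dst e = v
      · exact ⟨e, by simp, hdv⟩
      · obtain ⟨f, hf, hdf⟩ := ih h' hdv
        exact ⟨f, by simp [hf], hdf⟩

theorem visits_src {u v : ℕ} {p : List G.E} (h : EWalk G u v p) :
    ∀ f ∈ p, G.src f = u ∨ ∃ g ∈ p, G.dst g = G.src f := by
  induction h with
  | nil => intro f hf; simp at hf
  | cons e hu h ih =>
    intro f hf
    rcases List.mem_cons.mp hf with rfl | hf
    · exact Or.inl hu
    · rcases ih f hf with h' | ⟨g, hg, h'⟩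
      · exact Or.inr ⟨e, by simp, h'.symm⟩
      · exact Or.inr ⟨g, by simp [hg], h'⟩

end EWalk

/-- Extraction of a sub-walk between two visited nodes of a walk. -/
theorem seg {G : DAGInst} : ∀ (L : List G.E) (a b u v : ℕ), EWalk G a b L →
    (u = a ∨ ∃ f ∈ L, G.dst f = u) → (v = a ∨ ∃ f ∈ L, G.dst f = v) → u ≤ v →
    ∃ r : List G.E, (∀ f ∈ r, f ∈ L) ∧ EWalk G u v r := by
  intro L
  induction L with
  | nil =>
    intro a b u v hw hu hv huv
    obtain (rfl | ⟨f, hf, -⟩) := hu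
    swap; · simp at hf
    obtain (rfl | ⟨f, hf, -⟩) := hv
    swap; · simp at hf
    exact ⟨[], by simp, .nil _⟩
  | cons e L ih =>
    intro a b u v hw hu hv huv
    cases hw with
    | cons _ ha hw' =>
      have hlt : a < G.dst e := by have := G.src_lt_dst e; omega
      rcases hu with rfl | ⟨f0, hf0, hu⟩
      · rcases hv with rfl | ⟨f1, hf1, hv⟩
        · exact ⟨[], by simp, .nil _⟩
        · have hdev : G.dst e ≤ v := by
            rcases List.mem_cons.mp hf1 with rfl | h1
            · exact le_of_eq hv
            · have h2 := hw'.src_le f1 h1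
              have h3 := G.src_lt_dst f1
              omega
          obtain ⟨r, hr, hwr⟩ := ih (G.dst e) b (G.dst e) v hw' (Or.inl rfl)
            (by rcases List.mem_cons.mp hf1 with rfl | h1
                · exact Or.inl hv.symm
                · exact Or.inr ⟨f1, h1, hv⟩) hdev
          refine ⟨e :: r, ?_, .cons e ha hwr⟩
          intro f hf
          rcases List.mem_cons.mp hf with rfl | hf
          · simp
          · simp [hr f hf]
      · have hau : a < u := by
          rcases List.mem_cons.mp hf0 with rfl | h0
          · omega
          · have h2 := hw'.src_le f0 h0
            have h3 := G.src_lt_dst f0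
            omega
        have hu' : u = G.dst e ∨ ∃ f ∈ L, G.dst f = u := by
          rcases List.mem_cons.mp hf0 with rfl | h0
          · exact Or.inl hu.symm
          · exact Or.inr ⟨f0, h0, hu⟩
        rcases hv with rfl | ⟨f1, hf1, hv⟩
        · omega
        · have hv' : v = G.dst e ∨ ∃ f ∈ L, G.dst f = v := by
            rcases List.mem_cons.mp hf1 with rfl | h1
            · exact Or.inl hv.symm
            · exact Or.inr ⟨f1, h1, hv⟩
          obtain ⟨r, hr, hwr⟩ := ih (G.dst e) b u v hw' hu' hv' huv
          exact ⟨r, fun f hf => List.mem_cons_of_mem _ (hr f hf), hwr⟩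

/-- A walk in the auxiliary graph `G_i`. -/
inductive AWalk (G : DAGInst) (Pi : List G.E) : ℕ → ℕ → List (G.E ⊕ G.E) → Prop
  | nil (u : ℕ) : AWalk G Pi u u List.nil
  | cons (f : G.E ⊕ G.E) {u v : ℕ} {p : List (G.E ⊕ G.E)} (hu : G.auxSrc f = u)
      (hf : G.auxValid Pi f) (h : AWalk G Pi (G.auxDst Pi f) v p) : AWalk G Pi u v (f :: p)

namespace AWalk

variable {G : DAGInst} {Pi : List G.E}

theorem nil_eq {u v : ℕ} (h : AWalk G Pi u v List.nil) : u = v := by cases h; rfl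

theorem append {u v x : ℕ} {p q : List (G.E ⊕ G.E)}
    (h : AWalk G Pi u v p) (h' : AWalk G Pi v x q) : AWalk G Pi u x (p ++ q) := by
  induction h with
  | nil => exact h'
  | cons f hu hf h ih => exact .cons f hu hf (ih h')

theorem valid {u v : ℕ} {p : List (G.E ⊕ G.E)} (h : AWalk G Pi u v p) :
    ∀ f ∈ p, G.auxValid Pi f := by
  induction h with
  | nil => intro f hf; simp at hf
  | cons f hu hf h ih =>
    intro g hg
    rcases List.mem_cons.mp hg with rfl | hg
    · exact hf
    · exact ih g hg

theorem head_src {u v : ℕ} {p : List (G.E ⊕ G.E)} (h : AWalk G Pi u v p) :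
    ∀ f, p.head? = some f → G.auxSrc f = u := by
  cases h with
  | nil => intro f hf; simp at hf
  | cons e hu hf h => intro f hf; simp at hf; subst hf; exact hu

theorem chain' {u v : ℕ} {p : List (G.E ⊕ G.E)} (h : AWalk G Pi u v p) :
    List.Chain' (fun f g => G.auxDst Pi f = G.auxSrc g) p := by
  induction h with
  | nil => exact List.isChain_nil
  | cons f hu hf h ih =>
    refine List.isChain_cons.mpr ⟨fun b hb => ?_, ih⟩
    exact (h.head_src b hb).symm

theorem getLast_dst : ∀ {p : List (G.E ⊕ G.E)} {u v : ℕ}, AWalk G Pi u v p →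
    ∀ f, p.getLast? = some f → G.auxDst Pi f = v := by
  intro p
  induction p with
  | nil => intro u v h f hf; simp at hf
  | cons e p' ih =>
    intro u v h f hf
    cases h with
    | cons _ hu he h' =>
      cases p' with
      | nil => simp at hf; subst hf; exact h'.nil_eq
      | cons g p'' =>
        rw [List.getLast?_cons_cons] at hf
        exact ih h' f hf

theorem ofE {u v : ℕ} {r : List G.E} (h : EWalk G u v r)
    (hmem : ∀ f ∈ r, G.Visits Pi (G.src f) ∧ G.Visits Pi (G.dst f)) :
    AWalk G Pi u v (r.map Sum.inl) := by
  induction h with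
  | nil => exact .nil _
  | cons e hu h ih =>
    refine .cons (Sum.inl e) hu (hmem e (by simp)) ?_
    exact ih fun f hf => hmem f (by simp [hf])

end AWalk

theorem auxWeight_nonneg {G : DAGInst} {w : G.E → ℝ} (hw : ∀ e, 0 ≤ w e)
    (f : G.E ⊕ G.E) : 0 ≤ G.auxWeight w f := by
  cases f <;> exact hw _

theorem sum_auxWeight_nonneg {G : DAGInst} {w : G.E → ℝ} (hw : ∀ e, 0 ≤ w e)
    (p : List (G.E ⊕ G.E)) : 0 ≤ (p.map (G.auxWeight w)).sum := by
  refine List.sum_nonneg ?_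
  intro x hx
  obtain ⟨f, -, rfl⟩ := List.mem_map.mp hx
  exact auxWeight_nonneg hw f

theorem dropWhile_head_false {α : Type} (p : α → Bool) :
    ∀ (l : List α) (f : α) (T : List α), l.dropWhile p = f :: T → p f = false := by
  intro l
  induction l with
  | nil => intro f T h; simp at h
  | cons a l ih =>
    intro f T h
    rw [List.dropWhile_cons] at h
    split at h
    · exact ih f T h
    · next hpa =>
      obtain ⟨rfl, rfl⟩ := List.cons.injEq .. ▸ h
      simpa using hpa

theorem dropWhile_length_le' {α : Type} (p : α → Bool) (l : List α) :
    (l.dropWhile p).length ≤ l.length := by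
  induction l with
  | nil => simp
  | cons a l ih =>
    rw [List.dropWhile_cons]
    split
    · simp only [List.length_cons]; omega
    · simp

theorem toWalk {G : DAGInst} : ∀ (L : List G.E) (u v : ℕ),
    List.Chain' (fun e f => G.dst e = G.src f) L →
    (∀ e ∈ L.head?, G.src e = u) → (L = [] → u = v) →
    (∀ e ∈ L.getLast?, G.dst e = v) → EWalk G u v L := by
  intro L
  induction L with
  | nil =>
    intro u v _ _ h _
    exact h rfl ▸ .nil u
  | cons e L ih =>
    intro u v hc hh hn hl
    obtain ⟨hce, hcL⟩ := List.isChain_cons.mp hc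
    refine .cons e (hh e rfl) (ih (G.dst e) v hcL ?_ ?_ ?_)
    · intro f hf
      exact (hce f hf).symm
    · intro hL
      subst hL
      exact hl e rfl
    · intro f hf
      cases L with
      | nil => simp at hf
      | cons g L' =>
        exact hl f (by rw [List.getLast?_cons_cons]; exact hf)

/-- Conversion from `IsPath` to `EWalk`. -/
theorem pathWalk {G : DAGInst} {Q : List G.E} (hQ : G.IsPath Q) : EWalk G 0 G.n Q := by
  obtain ⟨h1, h2, h3⟩ := hQ
  refine toWalk Q 0 G.n h3 ?_ ?_ ?_
  · intro e he
    rw [Option.mem_def] at he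
    rw [he] at h1
    simpa using h1
  · intro h
    subst h
    simp at h1
  · intro e he
    rw [Option.mem_def] at he
    rw [he] at h2
    simpa using h2

/-- The main induction: from any node `u ∈ V(P_i)` and any walk `Q` from `u` to `n`,
the auxiliary graph contains a walk from `u` to `n` of at least the filtered weight. -/
theorem main {G : DAGInst} (w : G.E → ℝ) (hw : ∀ e, 0 ≤ w e)
    (Pi : List G.E) (hPiW : EWalk G 0 G.n Pi) :
    ∀ (m : ℕ) (Q : List G.E), Q.length ≤ m → ∀ u, G.Visits Pi u → EWalk G u G.n Q →
      ∃ p, AWalk G Pi u G.n p ∧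
        ((Q.filter fun e => decide (G.Visits Pi (G.src e))).map w).sum ≤
          (p.map (G.auxWeight w)).sum := by
  have hnpos := G.n_pos
  have hvis_n : G.Visits Pi G.n := by
    obtain ⟨f, hf, hdf⟩ := hPiW.exists_dst (by omega)
    exact Or.inr ⟨f, hf, hdf⟩
  have hvis_src : ∀ e ∈ Pi, G.Visits Pi (G.src e) := fun e he => hPiW.visits_src e he
  have hvis_le : ∀ v, G.Visits Pi v → v ≤ G.n := by
    rintro v (rfl | ⟨e, he, rfl⟩)
    · omega
    · exact G.dst_le_n e
  have segA : ∀ u v : ℕ, G.Visits Pi u → G.Visits Pi v → u ≤ v →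
      ∃ r, AWalk G Pi u v r ∧ 0 ≤ (r.map (G.auxWeight w)).sum := by
    intro u v hu hv huv
    obtain ⟨r, hr, hwr⟩ := seg Pi 0 G.n u v hPiW hu hv huv
    exact ⟨r.map Sum.inl, AWalk.ofE hwr fun f hf =>
      ⟨hvis_src f (hr f hf), Or.inr ⟨f, hr f hf, rfl⟩⟩,
      sum_auxWeight_nonneg hw _⟩
  intro m
  induction m with
  | zero =>
    intro Q hQl u hu hwalk
    have hQnil : Q = [] := List.length_eq_zero_iff.mp (Nat.le_zero.mp hQl)
    subst hQnil
    obtain rfl := hwalk.nil_eq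
    exact ⟨[], .nil _, by simp⟩
  | succ m ih =>
    intro Q hQl u hu hwalk
    cases Q with
    | nil =>
      obtain rfl := hwalk.nil_eq
      exact ⟨[], .nil _, by simp⟩
    | cons e Q' =>
      cases hwalk with
      | cons _ hsrc hwalk' =>
        have huse : G.Visits Pi (G.src e) := by rwa [hsrc]
        by_cases hd : G.Visits Pi (G.dst e)
        · obtain ⟨p', hp', hsum⟩ := ih Q' (by simpa using hQl) (G.dst e) hd hwalk'
          refine ⟨Sum.inl e :: p', .cons (Sum.inl e) hsrc ⟨huse, hd⟩ hp', ?_⟩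
          rw [List.filter_cons, if_pos (by simpa using huse)]
          simp only [List.map_cons, List.sum_cons, DAGInst.auxWeight]
          linarith
        · have hSne : {v | G.Visits Pi v ∧ G.Reaches (G.dst e) v}.Nonempty :=
            ⟨G.n, hvis_n, hwalk'.reaches⟩
          have hv'mem : G.Visits Pi (G.auxDst Pi (Sum.inr e)) ∧
              G.Reaches (G.dst e) (G.auxDst Pi (Sum.inr e)) := by
            have := Nat.sInf_mem hSne
            simpa [DAGInst.auxDst] using this
          set v' := G.auxDst Pi (Sum.inr e) with hv'def
          set pr := fun g : G.E => !(decide (G.Visits Pi (G.src g))) with hprdef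
          have hsplit : Q'.takeWhile pr ++ Q'.dropWhile pr = Q' :=
            List.takeWhile_append_dropWhile (p := pr) (l := Q')
          have hwsplit : EWalk G (G.dst e) G.n (Q'.takeWhile pr ++ Q'.dropWhile pr) := by
            rwa [hsplit]
          obtain ⟨x, hwR, hwT⟩ := hwsplit.append_inv
          have hRfilter : (Q'.takeWhile pr).filter
              (fun g => decide (G.Visits Pi (G.src g))) = [] := by
            rw [List.filter_eq_nil_iff]
            intro g hg
            have := List.mem_takeWhile_imp hg
            simpa [hprdef] using this
          have hfilterQ' : Q'.filter (fun g => decide (G.Visits Pi (G.src g))) =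
              (Q'.dropWhile pr).filter (fun g => decide (G.Visits Pi (G.src g))) := by
            conv_lhs => rw [← hsplit]
            rw [List.filter_append, hRfilter, List.nil_append]
          cases hT : Q'.dropWhile pr with
          | nil =>
            obtain ⟨r, hr, hrs⟩ := segA v' G.n hv'mem.1 hvis_n (hvis_le _ hv'mem.1)
            refine ⟨Sum.inr e :: r, .cons (Sum.inr e) hsrc ⟨huse, hd⟩ hr, ?_⟩
            rw [List.filter_cons, if_pos (by simpa using huse), hfilterQ', hT]
            simp only [List.filter_nil, List.map_cons, List.map_nil, List.sum_cons,
              List.sum_nil, add_zero]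
            have : G.auxWeight w (Sum.inr e) = w e := rfl
            rw [this]
            linarith
          | cons f T' =>
            have hfvis : G.Visits Pi (G.src f) := by
              have := dropWhile_head_false pr Q' f T' hT
              simpa [hprdef] using this
            rw [hT] at hwT
            have hx : G.src f = x := hwT.head_src f rfl
            have hlen : (f :: T').length ≤ m := by
              have h1 := dropWhile_length_le' pr Q'
              rw [hT] at h1
              simp only [List.length_cons] at hQl
              omega
            obtain ⟨p'', hp'', hsum''⟩ := ih (f :: T') hlen (G.src f) hfvis (hx ▸ hwT)
            have hru : v' ≤ G.src f := by
              rw [hv'def]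
              show sInf {v | G.Visits Pi v ∧ G.Reaches (G.dst e) v} ≤ G.src f
              exact Nat.sInf_le ⟨hfvis, (hx ▸ hwR : EWalk G (G.dst e) (G.src f) _).reaches⟩
            obtain ⟨r, hr, hrs⟩ := segA v' (G.src f) hv'mem.1 hfvis hru
            refine ⟨Sum.inr e :: (r ++ p''),
              .cons (Sum.inr e) hsrc ⟨huse, hd⟩ (hr.append hp''), ?_⟩
            rw [List.filter_cons, if_pos (by simpa using huse), hfilterQ', hT]
            simp only [List.map_cons, List.sum_cons, List.map_append, List.sum_append]
            have : G.auxWeight w (Sum.inr e) = w e := rfl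
            rw [this]
            linarith

end PPD

/-- **Per-path decomposition lemma** (used in the proof of Theorem 4.1): for every
`s,t`-path `Q` of `G`, the auxiliary graph `G_i` contains an `s,t`-path whose total
weight is at least the total weight of the edges of `Q` that start in `V(P_i)`. -/
theorem per_path_decomposition
    (G : DAGInst) (w : G.E → ℝ) (hw : ∀ e, 0 ≤ w e)
    (k : ℕ) (P : Fin k → List G.E) (hP : ∀ i, G.IsPath (P i))
    (hcover : ∀ v ≤ G.n, ∃ i, G.Visits (P i) v)
    (i : Fin k) (Q : List G.E) (hQ : G.IsPath Q) :
    ∃ p : List (G.E ⊕ G.E), G.IsAuxPath (P i) p ∧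
      ((Q.filter fun e => decide (G.Visits (P i) (G.src e))).map w).sum ≤
        (p.map (G.auxWeight w)).sum := by
  have hPiW : PPD.EWalk G 0 G.n (P i) := PPD.pathWalk (hP i)
  obtain ⟨p, hp, hsum⟩ := PPD.main w hw (P i) hPiW Q.length Q le_rfl 0 (Or.inl rfl)
    (PPD.pathWalk hQ)
  refine ⟨p, ⟨hp.valid, ?_, ?_, hp.chain'⟩, hsum⟩
  · cases p with
    | nil => have := hp.nil_eq; have := G.n_pos; omega
    | cons f p' => simp [hp.head_src f rfl]
  · cases p with
    | nil => have := hp.nil_eq; have := G.n_pos; omega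
    | cons f p' =>
      obtain ⟨g, hg⟩ : ∃ g, (f :: p').getLast? = some g := by
        cases hh : (f :: p').getLast? with
        | none => rw [List.getLast?_eq_none_iff] at hh; simp at hh
        | some g => exact ⟨g, rfl⟩
      rw [hg]
      simp [hp.getLast_dst g hg]
end

section
/- Lemma (decomposition inequality, used in the proof of Theorem 4.1). Let G be a DAG instance with deterministic nonnegative weights w : E → ℝ≥0, let P_1,…,P_k be s,t-paths such that every node is visited by some P_i, and for each i let G_i be the graph with artificial edges constructed from P_i (node set V_i = nodes visited by P_i; edges: all edges of G with both endpoints in V_i, plus, for each edge e with src(e) ∈ V_i and dst(e) ∉ V_i, an artificial edge from src(e) to the smallest node of V_i reachable from dst(e) in G, carrying weight w_e). Then max over s,t-paths Q of G of Σ_{e ∈ Q} w_e ≤ Σ_{i=1}^k (max over s,t-paths of G_i of their total weight). -/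
open MeasureTheory ProbabilityTheory

namespace DecompositionAuxiliary

/-- Generic walks in a graph on `ℕ` given by source/destination maps. -/
def Wk {ε : Type} (s d : ε → ℕ) : ℕ → ℕ → List ε → Prop
  | u, v, [] => u = v
  | u, v, e :: l => s e = u ∧ Wk s d (d e) v l

theorem Wk.append {ε : Type} {s d : ε → ℕ} {l1 l2 : List ε} {u v x : ℕ}
    (h1 : Wk s d u v l1) (h2 : Wk s d v x l2) : Wk s d u x (l1 ++ l2) := by
  induction l1 generalizing u with
  | nil => simp only [Wk] at h1; subst h1; simpa using h2
  | cons e l ih => exact ⟨h1.1, ih h1.2⟩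

theorem Wk.le {ε : Type} {s d : ε → ℕ} (hsd : ∀ e, s e < d e) {l : List ε} {u v : ℕ}
    (h : Wk s d u v l) : u ≤ v := by
  induction l generalizing u with
  | nil => exact le_of_eq h
  | cons e l ih => exact le_trans (h.1 ▸ (hsd e).le) (ih h.2)

theorem Wk.src_ge {ε : Type} {s d : ε → ℕ} (hsd : ∀ e, s e < d e) {l : List ε} {u v : ℕ}
    (h : Wk s d u v l) : ∀ e ∈ l, u ≤ s e := by
  induction l generalizing u with
  | nil => simp
  | cons f l ih =>
    intro e he
    rcases List.mem_cons.mp he with rfl | he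
    · exact h.1.ge
    · calc u = s f := h.1.symm
        _ ≤ d f := (hsd f).le
        _ ≤ s e := ih h.2 e he

theorem wk_of_parts {ε : Type} {s d : ε → ℕ} :
    ∀ {l : List ε} {u v : ℕ}, l.head?.map s = some u → l.getLast?.map d = some v →
      List.Chain' (fun e f => d e = s f) l → Wk s d u v l := by
  intro l
  induction l with
  | nil => intro u v h; simp at h
  | cons e l ih =>
    intro u v h1 h2 h3
    have hu : s e = u := by simpa using h1
    refine ⟨hu, ?_⟩
    cases l with
    | nil =>
      have : d e = v := by simpa using h2
      exact this
    | cons f l' =>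
      have hc := List.isChain_cons_cons.mp h3
      exact ih (by simp [hc.1]) (by simpa [List.getLast?_cons_cons] using h2) hc.2

theorem parts_of_wk {ε : Type} {s d : ε → ℕ} :
    ∀ {l : List ε} {u v : ℕ}, Wk s d u v l → l ≠ [] →
      l.head?.map s = some u ∧ l.getLast?.map d = some v ∧
        List.Chain' (fun e f => d e = s f) l := by
  intro l
  induction l with
  | nil => intro u v _ h; exact absurd rfl h
  | cons e l ih =>
    intro u v h _
    obtain ⟨h1, h2⟩ := h
    cases l with
    | nil =>
      have hd : d e = v := h2
      exact ⟨by simp [h1], by simp [hd], List.IsChain.singleton e⟩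
    | cons f l' =>
      obtain ⟨p1, p2, p3⟩ := ih h2 (by simp)
      have hdf : s f = d e := by simpa using p1
      refine ⟨by simp [h1], by simpa [List.getLast?_cons_cons] using p2, ?_⟩
      exact List.isChain_cons_cons.mpr ⟨hdf.symm, p3⟩

theorem wk_seg {ε : Type} {s d : ε → ℕ} :
    ∀ {l : List ε} {u b : ℕ}, Wk s d u b l → ∀ v, (v = u ∨ ∃ e ∈ l, d e = v) →
      ∃ l1 l2, l = l1 ++ l2 ∧ Wk s d u v l1 ∧ Wk s d v b l2 := by
  intro l
  induction l with
  | nil =>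
    intro u b h v hv
    rcases hv with rfl | ⟨e, he, _⟩
    · exact ⟨[], [], rfl, rfl, h⟩
    · simp at he
  | cons f l ih =>
    intro u b h v hv
    rcases hv with rfl | ⟨e, he, hde⟩
    · exact ⟨[], f :: l, rfl, rfl, h⟩
    rcases List.mem_cons.mp he with rfl | he
    · exact ⟨[e], l, rfl, ⟨h.1, hde⟩, hde ▸ h.2⟩
    · obtain ⟨l1, l2, hl, w1, w2⟩ := ih h.2 v (Or.inr ⟨e, he, hde⟩)
      exact ⟨f :: l1, l2, by rw [hl]; rfl, ⟨h.1, w1⟩, w2⟩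

theorem reaches_iff_wk (G : DAGInst) (u v : ℕ) :
    G.Reaches u v ↔ ∃ q, Wk G.src G.dst u v q := by
  constructor
  · rintro (rfl | ⟨q, h1, h2, h3⟩)
    · exact ⟨[], rfl⟩
    · exact ⟨q, wk_of_parts h1 h2 h3⟩
  · rintro ⟨q, hq⟩
    rcases q with _ | ⟨e, q⟩
    · exact Or.inl hq
    · obtain ⟨p1, p2, p3⟩ := parts_of_wk hq (by simp)
      exact Or.inr ⟨_, p1, p2, p3⟩

theorem reaches_le {G : DAGInst} {u v : ℕ} (h : G.Reaches u v) : u ≤ v := by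
  obtain ⟨q, hq⟩ := (reaches_iff_wk G u v).mp h
  exact hq.le G.src_lt_dst

theorem reaches_prepend {G : DAGInst} (f : G.E) {y : ℕ}
    (h : G.Reaches (G.dst f) y) : G.Reaches (G.src f) y := by
  obtain ⟨q, hq⟩ := (reaches_iff_wk G _ _).mp h
  exact (reaches_iff_wk G _ _).mpr ⟨f :: q, rfl, hq⟩

theorem wk_of_isPath {G : DAGInst} {p : List G.E} (hp : G.IsPath p) :
    Wk G.src G.dst 0 G.n p :=
  wk_of_parts hp.1 hp.2.1 hp.2.2

theorem visits_n_of_isPath {G : DAGInst} {p : List G.E} (hp : G.IsPath p) :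
    G.Visits p G.n := by
  obtain ⟨-, h2, -⟩ := hp
  rcases Option.map_eq_some_iff.mp h2 with ⟨e, he, hd⟩
  exact Or.inr ⟨e, List.mem_of_getLast? he, hd⟩

theorem wk_visits_src {G : DAGInst} {Pi : List G.E} :
    ∀ {l : List G.E} {u b : ℕ}, Wk G.src G.dst u b l → G.Visits Pi u →
      (∀ e ∈ l, e ∈ Pi) → ∀ e ∈ l, G.Visits Pi (G.src e) := by
  intro l
  induction l with
  | nil => simp
  | cons f l ih =>
    intro u b h hu hsub e he
    rcases List.mem_cons.mp he with rfl | he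
    · rw [h.1]; exact hu
    · exact ih h.2 (Or.inr ⟨f, hsub f (by simp), rfl⟩)
        (fun e' he' => hsub e' (by simp [he'])) e he

theorem wk_map_inl {G : DAGInst} (Pi : List G.E) :
    ∀ {l : List G.E} {u v : ℕ}, Wk G.src G.dst u v l →
      Wk G.auxSrc (G.auxDst Pi) u v (l.map Sum.inl) := by
  intro l
  induction l with
  | nil => intro u v h; exact h
  | cons e l ih => intro u v h; exact ⟨h.1, ih h.2⟩

theorem connector {G : DAGInst} (w : G.E → ℝ) (hw : ∀ e, 0 ≤ w e)
    {Pi : List G.E} (hPi : G.IsPath Pi) {x v : ℕ}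
    (hx : G.Visits Pi x) (hv : G.Visits Pi v) (hxv : x ≤ v) :
    ∃ c : List (G.E ⊕ G.E), Wk G.auxSrc (G.auxDst Pi) x v c ∧
      (∀ f ∈ c, G.auxValid Pi f) ∧ 0 ≤ (c.map (G.auxWeight w)).sum := by
  have hwk : Wk G.src G.dst 0 G.n Pi := wk_of_isPath hPi
  obtain ⟨W1, W2, hsplit, w1, w2⟩ := wk_seg hwk v hv
  have hx1 : x = 0 ∨ ∃ e ∈ W1, G.dst e = x := by
    rcases hx with rfl | ⟨e, he, hde⟩
    · exact Or.inl rfl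
    · rw [hsplit] at he
      rcases List.mem_append.mp he with he | he
      · exact Or.inr ⟨e, he, hde⟩
      · exfalso
        have h1 : v ≤ G.src e := w2.src_ge G.src_lt_dst e he
        have h2 := G.src_lt_dst e
        omega
  obtain ⟨A, B, hAB, wA, wB⟩ := wk_seg w1 x hx1
  have hBPi : ∀ e ∈ B, e ∈ Pi := by
    intro e he
    rw [hsplit, hAB]
    simp [he]
  refine ⟨B.map Sum.inl, wk_map_inl Pi wB, ?_, ?_⟩
  · rintro f hf
    rcases List.mem_map.mp hf with ⟨e, he, rfl⟩
    exact ⟨wk_visits_src wB hx hBPi e he, Or.inr ⟨e, hBPi e he, rfl⟩⟩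
  · apply List.sum_nonneg
    intro a ha
    rcases List.mem_map.mp ha with ⟨f, hf, rfl⟩
    rcases List.mem_map.mp hf with ⟨e, _, rfl⟩
    exact hw e

theorem claimC {G : DAGInst} (w : G.E → ℝ) (hw : ∀ e, 0 ≤ w e)
    {Pi : List G.E} (hPi : G.IsPath Pi)
    (hreach : ∀ v ≤ G.n, G.Reaches v G.n) :
    ∀ (Q : List G.E) (v x : ℕ), Wk G.src G.dst v G.n Q → G.Visits Pi x →
      (∀ y, G.Visits Pi y → G.Reaches v y → x ≤ y) →
      ∃ p, Wk G.auxSrc (G.auxDst Pi) x G.n p ∧ (∀ f ∈ p, G.auxValid Pi f) ∧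
        (Q.map fun e => if G.Visits Pi (G.src e) then w e else 0).sum ≤
          (p.map (G.auxWeight w)).sum := by
  intro Q
  induction Q with
  | nil =>
    intro v x hwk hx hinv
    have hv : v = G.n := hwk
    subst hv
    have hxn : x ≤ G.n := hinv G.n (visits_n_of_isPath hPi) (Or.inl rfl)
    obtain ⟨c, hc1, hc2, hc3⟩ := connector w hw hPi hx (visits_n_of_isPath hPi) hxn
    exact ⟨c, hc1, hc2, by simpa using hc3⟩
  | cons f Q ih =>
    intro v x hwk hx hinv
    obtain ⟨hsf, hwk'⟩ := hwk
    by_cases hV : G.Visits Pi (G.src f)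
    · have hxv : x ≤ G.src f := hinv (G.src f) hV (Or.inl hsf.symm)
      obtain ⟨c, hc1, hc2, hc3⟩ := connector w hw hPi hx hV hxv
      by_cases hVd : G.Visits Pi (G.dst f)
      · obtain ⟨p', hp1, hp2, hp3⟩ := ih (G.dst f) (G.dst f) hwk' hVd
          (fun y _ hr => reaches_le hr)
        refine ⟨c ++ Sum.inl f :: p', hc1.append ⟨rfl, hp1⟩, ?_, ?_⟩
        · intro g hg
          rcases List.mem_append.mp hg with hg | hg
          · exact hc2 g hg
          · rcases List.mem_cons.mp hg with rfl | hg
            · exact ⟨hV, hVd⟩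
            · exact hp2 g hg
        · simp only [List.map_cons, List.sum_cons, List.map_append, List.sum_append,
            if_pos hV]
          have hwf : G.auxWeight w (Sum.inl f) = w f := rfl
          rw [hwf]
          linarith
      · have hSn : G.Visits Pi G.n ∧ G.Reaches (G.dst f) G.n :=
          ⟨visits_n_of_isPath hPi, hreach _ (G.dst_le_n f)⟩
        have hmem : sInf {v | G.Visits Pi v ∧ G.Reaches (G.dst f) v} ∈
            {v | G.Visits Pi v ∧ G.Reaches (G.dst f) v} :=
          Nat.sInf_mem ⟨G.n, hSn⟩
        obtain ⟨p', hp1, hp2, hp3⟩ := ih (G.dst f)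
          (sInf {v | G.Visits Pi v ∧ G.Reaches (G.dst f) v}) hwk' hmem.1
          (fun y hy hr => Nat.sInf_le ⟨hy, hr⟩)
        refine ⟨c ++ Sum.inr f :: p', hc1.append ⟨rfl, hp1⟩, ?_, ?_⟩
        · intro g hg
          rcases List.mem_append.mp hg with hg | hg
          · exact hc2 g hg
          · rcases List.mem_cons.mp hg with rfl | hg
            · exact ⟨hV, hVd⟩
            · exact hp2 g hg
        · simp only [List.map_cons, List.sum_cons, List.map_append, List.sum_append,
            if_pos hV]
          have hwf : G.auxWeight w (Sum.inr f) = w f := rfl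
          rw [hwf]
          linarith
    · obtain ⟨p, hp1, hp2, hp3⟩ := ih (G.dst f) x hwk' hx
        (fun y hy hr => hinv y hy (hsf ▸ reaches_prepend f hr))
      refine ⟨p, hp1, hp2, ?_⟩
      simp only [List.map_cons, List.sum_cons, if_neg hV]
      linarith

theorem chain_lt_of {α : Type} {R : α → α → Prop} {s' d' : α → ℕ} :
    ∀ {l : List α}, List.Chain' R l → (∀ f ∈ l, s' f < d' f) →
      (∀ f g, R f g → d' f = s' g) → List.Chain' (fun f g => s' f < s' g) l := by
  intro l
  induction l with
  | nil => intros; exact List.IsChain.nil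
  | cons f l ih =>
    intro hc hm himp
    cases l with
    | nil => exact List.IsChain.singleton f
    | cons g l' =>
      obtain ⟨h1, h2⟩ := List.isChain_cons_cons.mp hc
      refine List.isChain_cons_cons.mpr ⟨?_, ih h2 (fun f' hf' => hm f' (by simp [hf'])) himp⟩
      exact (himp f g h1) ▸ hm f (by simp)

theorem aux_bdd {G : DAGInst} (w : G.E → ℝ) (hw : ∀ e, 0 ≤ w e)
    {Pi : List G.E} (hPi : G.IsPath Pi)
    (hreach : ∀ v ≤ G.n, G.Reaches v G.n) :
    BddAbove {x | ∃ p : List (G.E ⊕ G.E), G.IsAuxPath Pi p ∧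
      x = (p.map (G.auxWeight w)).sum} := by
  classical
  set C := ∑ e : G.E, w e with hC
  have hC0 : 0 ≤ C := Finset.sum_nonneg fun e _ => hw e
  have hWle : ∀ f, G.auxWeight w f ≤ C := by
    intro f
    cases f with
    | inl e => exact Finset.single_le_sum (fun e _ => hw e) (Finset.mem_univ e)
    | inr e => exact Finset.single_le_sum (fun e _ => hw e) (Finset.mem_univ e)
  refine ⟨(G.n : ℝ) * C, ?_⟩
  rintro x ⟨p, hp, rfl⟩
  have hstep : ∀ f ∈ p, G.auxSrc f < G.auxDst Pi f := by
    intro f hf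
    cases f with
    | inl e => exact G.src_lt_dst e
    | inr e =>
      have hSn : G.Visits Pi G.n ∧ G.Reaches (G.dst e) G.n :=
        ⟨visits_n_of_isPath hPi, hreach _ (G.dst_le_n e)⟩
      have hmem : sInf {v | G.Visits Pi v ∧ G.Reaches (G.dst e) v} ∈
          {v | G.Visits Pi v ∧ G.Reaches (G.dst e) v} := Nat.sInf_mem ⟨G.n, hSn⟩
      exact lt_of_lt_of_le (G.src_lt_dst e) (reaches_le hmem.2)
  have hchain : List.Chain' (fun f g => G.auxSrc f < G.auxSrc g) p :=
    chain_lt_of hp.2.2.2 hstep (fun f g h => h)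
  have hchain' : List.Chain' (· < ·) (p.map G.auxSrc) :=
    (List.isChain_map _).mpr hchain
  have hnd : (p.map G.auxSrc).Nodup :=
    (List.isChain_iff_pairwise.mp hchain').imp ne_of_lt
  have hlt : ∀ a ∈ p.map G.auxSrc, a < G.n := by
    intro a ha
    rcases List.mem_map.mp ha with ⟨f, hf, rfl⟩
    cases f with
    | inl e => exact lt_of_lt_of_le (G.src_lt_dst e) (G.dst_le_n e)
    | inr e => exact lt_of_lt_of_le (G.src_lt_dst e) (G.dst_le_n e)
  have hsub : (p.map G.auxSrc).toFinset ⊆ Finset.range G.n := by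
    intro a ha
    rw [List.mem_toFinset] at ha
    exact Finset.mem_range.mpr (hlt a ha)
  have hlen : p.length ≤ G.n := by
    have hcard := Finset.card_le_card hsub
    rwa [List.toFinset_card_of_nodup hnd, List.length_map, Finset.card_range] at hcard
  have hsum : (p.map (G.auxWeight w)).sum ≤ (p.map (G.auxWeight w)).length • C := by
    apply List.sum_le_card_nsmul
    intro a ha
    rcases List.mem_map.mp ha with ⟨f, _, rfl⟩
    exact hWle f
  rw [List.length_map, nsmul_eq_mul] at hsum
  calc (p.map (G.auxWeight w)).sum ≤ (p.length : ℝ) * C := hsum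
    _ ≤ (G.n : ℝ) * C := by
        apply mul_le_mul_of_nonneg_right _ hC0
        exact_mod_cast hlen

theorem split_sum {G : DAGInst} (w : G.E → ℝ) (hw : ∀ e, 0 ≤ w e)
    {k : ℕ} (P : Fin k → List G.E) :
    ∀ Q : List G.E, (∀ e ∈ Q, ∃ i, G.Visits (P i) (G.src e)) →
      (Q.map w).sum ≤ ∑ i : Fin k,
        (Q.map fun e => if G.Visits (P i) (G.src e) then w e else 0).sum := by
  intro Q
  induction Q with
  | nil => simp
  | cons e Q ih =>
    intro h
    simp only [List.map_cons, List.sum_cons]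
    rw [Finset.sum_add_distrib]
    refine add_le_add ?_ (ih fun e' he' => h e' (by simp [he']))
    obtain ⟨i, hi⟩ := h e (by simp)
    calc w e = if G.Visits (P i) (G.src e) then w e else 0 := (if_pos hi).symm
      _ ≤ ∑ j : Fin k, if G.Visits (P j) (G.src e) then w e else 0 :=
          Finset.single_le_sum (f := fun j => if G.Visits (P j) (G.src e) then w e else 0)
            (fun j _ => by split <;> simp [hw e]) (Finset.mem_univ i)

end DecompositionAuxiliary

open DecompositionAuxiliary

/-- **Decomposition inequality** (used in the proof of Theorem 4.1): the value of the best
`s,t`-path of `G` is at most the sum over `i` of the values of the best `s,t`-paths of the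
auxiliary graphs `G_i`. -/
theorem decomposition_inequality
    (G : DAGInst) (w : G.E → ℝ) (hw : ∀ e, 0 ≤ w e)
    (k : ℕ) (P : Fin k → List G.E) (hP : ∀ i, G.IsPath (P i))
    (hcover : ∀ v ≤ G.n, ∃ i, G.Visits (P i) v) :
    sSup {x | ∃ Q, G.IsPath Q ∧ x = G.pathValue Q w} ≤
      ∑ i : Fin k,
        sSup {x | ∃ p : List (G.E ⊕ G.E), G.IsAuxPath (P i) p ∧
          x = (p.map (G.auxWeight w)).sum} := by
  classical
  have hreach : ∀ v ≤ G.n, G.Reaches v G.n := by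
    intro v hv
    obtain ⟨i, hvis⟩ := hcover v hv
    obtain ⟨l1, l2, -, -, w2⟩ := wk_seg (wk_of_isPath (hP i)) v hvis
    exact (reaches_iff_wk G v G.n).mpr ⟨l2, w2⟩
  have hFi : ∀ Q : List G.E, Wk G.src G.dst 0 G.n Q → ∀ i : Fin k,
      (Q.map fun e => if G.Visits (P i) (G.src e) then w e else 0).sum ≤
        sSup {x | ∃ p : List (G.E ⊕ G.E), G.IsAuxPath (P i) p ∧
          x = (p.map (G.auxWeight w)).sum} := by
    intro Q hQwk i
    obtain ⟨p, hp1, hp2, hp3⟩ := claimC w hw (hP i) hreach Q 0 0 hQwk (Or.inl rfl)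
      (fun y _ _ => Nat.zero_le y)
    have hpne : p ≠ [] := by
      intro h
      subst h
      have : (0 : ℕ) = G.n := hp1
      have := G.n_pos
      omega
    obtain ⟨q1, q2, q3⟩ := parts_of_wk hp1 hpne
    exact le_trans hp3 (le_csSup (aux_bdd w hw (hP i) hreach) ⟨p, ⟨hp2, q1, q2, q3⟩, rfl⟩)
  have hex : ∃ Q : List G.E, Wk G.src G.dst 0 G.n Q := by
    obtain ⟨q, hq⟩ := (reaches_iff_wk G 0 G.n).mp (hreach 0 (Nat.zero_le _))
    exact ⟨q, hq⟩
  obtain ⟨Q0, hQ0⟩ := hex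
  have hB0 : 0 ≤ ∑ i : Fin k,
      sSup {x | ∃ p : List (G.E ⊕ G.E), G.IsAuxPath (P i) p ∧
        x = (p.map (G.auxWeight w)).sum} := by
    refine Finset.sum_nonneg fun i _ => le_trans ?_ (hFi Q0 hQ0 i)
    apply List.sum_nonneg
    intro a ha
    rcases List.mem_map.mp ha with ⟨e, _, rfl⟩
    split <;> simp [hw e]
  apply Real.sSup_le _ hB0
  rintro x ⟨Q, hQ, rfl⟩
  have hQwk := wk_of_isPath hQ
  have hsplit := split_sum w hw P Q (fun e he => by
    refine hcover (G.src e) ?_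
    have := G.src_lt_dst e
    have := G.dst_le_n e
    omega)
  exact le_trans hsplit (Finset.sum_le_sum fun i _ => hFi Q hQwk i)
end

section
/- Lemma (cut probabilities of a random path, used in the proofs of Theorem 3.1 and Lemma 4.5). Let a DAG instance be given, let X be a random s,t-path (a measurable map from a probability space into the finite set of s,t-paths), and let 0 < i < n. Then Σ_{e ∈ E_{−i}} P(e ∈ X) = P(X does not visit node i), where E_{−i} = {e ∈ E : src(e) < i < dst(e)}. In particular, if the instance has width 1 with focal path P₀, then Σ_{e ∈ E_{−i}} P(e ∈ X) ≤ 1 − P(X = P₀). -/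
open MeasureTheory ProbabilityTheory

namespace DAGInstAux

variable {G : Type} (src dst : G → ℕ)

/-- In a chain starting at `a`, every edge has source `≥ a`. -/
lemma mono_src (hsd : ∀ e, src e < dst e) (p : List G) (a : ℕ)
    (hc : List.Chain' (fun e f => dst e = src f) p)
    (ha : p.head?.map src = some a) :
    ∀ e ∈ p, a ≤ src e := by
  induction p generalizing a with
  | nil => simp
  | cons f rest ih =>
    simp only [List.head?_cons, Option.map_some, Option.some.injEq] at ha
    intro e he
    rcases List.mem_cons.mp he with rfl | he
    · omega
    · cases rest with
      | nil => simp at he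
      | cons g r =>
        have h1 : dst f = src g := (List.isChain_cons_cons.mp hc).1
        have := ih (dst f) (List.isChain_cons_cons.mp hc).2
          (by simp only [List.head?_cons, Option.map_some]; exact congrArg some h1.symm) e he
        have := hsd f
        omega

lemma count_one (hsd : ∀ e, src e < dst e) (p : List G) (i a b : ℕ)
    (hc : List.Chain' (fun e f => dst e = src f) p)
    (ha : p.head?.map src = some a)
    (hb : p.getLast?.map dst = some b)
    (hai : a < i) (hib : i < b)
    (hnv : ∀ e ∈ p, dst e ≠ i) :
    p.countP (fun e => decide (src e < i ∧ i < dst e)) = 1 := by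
  induction p generalizing a with
  | nil => simp at ha
  | cons f rest ih =>
    simp only [List.head?_cons, Option.map_some, Option.some.injEq] at ha
    have hfne : dst f ≠ i := hnv f (by simp)
    rcases lt_or_gt_of_ne hfne with hflt | hfgt
    · -- dst f < i: recurse on rest
      cases rest with
      | nil =>
        simp only [List.getLast?_singleton, Option.map_some, Option.some.injEq] at hb
        omega
      | cons g r =>
        have h1 : dst f = src g := (List.isChain_cons_cons.mp hc).1
        have hrec := ih (dst f) (List.isChain_cons_cons.mp hc).2
          (by simp only [List.head?_cons, Option.map_some]; exact congrArg some h1.symm)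
          (by rw [← hb]; rfl) hflt
          (fun e he => hnv e (List.mem_cons_of_mem _ he))
        rw [List.countP_cons]
        simp only [decide_eq_true_eq]
        rw [if_neg (by omega)]
        simpa using hrec
    · -- i < dst f: f crosses; rest has count 0
      have hrest : rest.countP (fun e => decide (src e < i ∧ i < dst e)) = 0 := by
        rw [List.countP_eq_zero]
        intro e he
        cases rest with
        | nil => simp at he
        | cons g r =>
          have h1 : dst f = src g := (List.isChain_cons_cons.mp hc).1
          have := mono_src src dst hsd (g :: r) (dst f)
            (List.isChain_cons_cons.mp hc).2
            (by simp only [List.head?_cons, Option.map_some]; exact congrArg some h1.symm) e he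
          simp only [decide_eq_true_eq]
          omega
      rw [List.countP_cons, hrest]
      simp only [decide_eq_true_eq]
      rw [if_pos (by omega)]

lemma count_zero (hsd : ∀ e, src e < dst e) (p : List G) (i : ℕ)
    (hc : List.Chain' (fun e f => dst e = src f) p)
    (e0 : G) (he0 : e0 ∈ p) (hd : dst e0 = i) :
    p.countP (fun e => decide (src e < i ∧ i < dst e)) = 0 := by
  induction p with
  | nil => simp
  | cons f rest ih =>
    have hmono : ∀ e ∈ rest, dst f ≤ src e := by
      intro e he
      cases rest with
      | nil => simp at he
      | cons g r =>
        have h1 : dst f = src g := (List.isChain_cons_cons.mp hc).1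
        exact mono_src src dst hsd (g :: r) (dst f)
          (List.isChain_cons_cons.mp hc).2
          (by simp only [List.head?_cons, Option.map_some]; exact congrArg some h1.symm) e he
    have hfnc : ¬ (src f < i ∧ i < dst f) := by
      rintro ⟨h1, h2⟩
      rcases List.mem_cons.mp he0 with rfl | he0
      · omega
      · have := hmono e0 he0
        have := hsd e0
        omega
    rw [List.countP_cons]
    simp only [decide_eq_true_eq]
    rw [if_neg hfnc, add_zero]
    rcases List.mem_cons.mp he0 with rfl | he0
    · rw [List.countP_eq_zero]
      intro e he
      have := hmono e he
      simp only [decide_eq_true_eq]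
      omega
    · exact ih hc.tail he0

end DAGInstAux

/-- **Cut probabilities of a random path**: the probabilities that a random `s,t`-path uses
the edges skipping an internal node `i` sum to the probability of not visiting `i`; in a
width-1 graph this sum is at most `1 - P(X = P₀)`. -/
theorem cut_probabilities
    (G : DAGInst) {Ω : Type} [mΩ : MeasurableSpace Ω]
    (μ : Measure Ω) [IsProbabilityMeasure μ]
    (X : Ω → List G.E) (hXpath : ∀ ω, G.IsPath (X ω))
    (hXmeas : @Measurable Ω (List G.E) mΩ ⊤ X)
    (i : ℕ) (hi0 : 0 < i) (hin : i < G.n) :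
    (∑ e ∈ Finset.univ.filter (fun e : G.E => G.src e < i ∧ i < G.dst e),
        μ {ω | e ∈ X ω}) = μ {ω | ¬ G.Visits (X ω) i} ∧
      ∀ P₀ : List G.E, G.IsPath P₀ → (∀ v ≤ G.n, G.Visits P₀ v) →
        (∑ e ∈ Finset.univ.filter (fun e : G.E => G.src e < i ∧ i < G.dst e),
          μ {ω | e ∈ X ω}) ≤ 1 - μ {ω | X ω = P₀} := by
  classical
  have hcount : ∀ ω, (X ω).countP (fun e => decide (G.src e < i ∧ i < G.dst e)) =
      if G.Visits (X ω) i then 0 else 1 := by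
    intro ω
    obtain ⟨h1, h2, h3⟩ := hXpath ω
    by_cases hv : G.Visits (X ω) i
    · rw [if_pos hv]
      rcases hv with h | ⟨e0, he0, hd⟩
      · omega
      · exact DAGInstAux.count_zero G.src G.dst G.src_lt_dst _ i h3 e0 he0 hd
    · rw [if_neg hv]
      refine DAGInstAux.count_one G.src G.dst G.src_lt_dst _ i 0 G.n h3 h1 h2 hi0 hin ?_
      intro e he hd
      exact hv (Or.inr ⟨e, he, hd⟩)
  have hcle : ∀ ω, (X ω).countP (fun e => decide (G.src e < i ∧ i < G.dst e)) ≤ 1 := by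
    intro ω
    rw [hcount ω]
    split <;> omega
  have hms : ∀ s : Set (List G.E), MeasurableSet (X ⁻¹' s) := fun s => hXmeas trivial
  set S := Finset.univ.filter (fun e : G.E => G.src e < i ∧ i < G.dst e) with hS
  have hunion : {ω | ¬ G.Visits (X ω) i} = ⋃ e ∈ S, {ω | e ∈ X ω} := by
    ext ω
    simp only [Set.mem_setOf_eq, Set.mem_iUnion, hS, Finset.mem_filter, Finset.mem_univ,
      true_and]
    constructor
    · intro hv
      have hc := hcount ω
      rw [if_neg hv] at hc
      have hpos : 0 < (X ω).countP (fun e => decide (G.src e < i ∧ i < G.dst e)) := by omega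
      obtain ⟨e, he, hce⟩ := List.countP_pos_iff.mp hpos
      simp only [decide_eq_true_eq] at hce
      exact ⟨e, hce, he⟩
    · rintro ⟨e, hce, he⟩ hv
      have hc := hcount ω
      rw [if_pos hv] at hc
      have hpos : 0 < (X ω).countP (fun e => decide (G.src e < i ∧ i < G.dst e)) :=
        List.countP_pos_iff.mpr ⟨e, he, by simpa using hce⟩
      omega
  have hdisj : (↑S : Set G.E).PairwiseDisjoint (fun e => {ω | e ∈ X ω}) := by
    intro e heS f hfS hef
    simp only [hS, Finset.coe_filter, Set.mem_setOf_eq, Finset.mem_univ, true_and] at heS hfS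
    refine Set.disjoint_left.mpr ?_
    intro ω he hf
    simp only [Set.mem_setOf_eq] at he hf
    have h2 : 2 ≤ (X ω).countP (fun e => decide (G.src e < i ∧ i < G.dst e)) := by
      rw [List.countP_eq_length_filter]
      have hsub : ({e, f} : Finset G.E) ⊆
          ((X ω).filter (fun e => decide (G.src e < i ∧ i < G.dst e))).toFinset := by
        intro x hx
        rcases Finset.mem_insert.mp hx with rfl | hx
        · rw [List.mem_toFinset, List.mem_filter]
          exact ⟨he, by simpa using heS⟩
        · rw [Finset.mem_singleton] at hx
          subst hx
          rw [List.mem_toFinset, List.mem_filter]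
          exact ⟨hf, by simpa using hfS⟩
      calc 2 = ({e, f} : Finset G.E).card := (Finset.card_pair hef).symm
        _ ≤ _ := Finset.card_le_card hsub
        _ ≤ _ := List.toFinset_card_le _
    have := hcle ω
    omega
  have hmeas' : ∀ e ∈ S, MeasurableSet {ω | e ∈ X ω} := fun e _ =>
    hms {p | e ∈ p}
  have hsum : (∑ e ∈ S, μ {ω | e ∈ X ω}) = μ {ω | ¬ G.Visits (X ω) i} := by
    rw [hunion, measure_biUnion_finset hdisj hmeas']
  refine ⟨hsum, ?_⟩
  intro P₀ hP₀ hPall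
  have hvm : MeasurableSet {ω | G.Visits (X ω) i} := hms {p | G.Visits p i}
  have hcompl : μ {ω | ¬ G.Visits (X ω) i} = 1 - μ {ω | G.Visits (X ω) i} := by
    have : {ω | ¬ G.Visits (X ω) i} = {ω | G.Visits (X ω) i}ᶜ := rfl
    rw [this, measure_compl hvm (measure_ne_top μ _), measure_univ]
  have hle : μ {ω | X ω = P₀} ≤ μ {ω | G.Visits (X ω) i} := by
    refine measure_mono ?_
    intro ω hω
    simp only [Set.mem_setOf_eq] at hω ⊢
    rw [hω]
    exact hPall i hin.le
  rw [hsum, hcompl]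
  exact tsub_le_tsub_left hle 1
end

section
/- Lemma (strand partition for disjoint covers, used in the proof of Theorem 4.4). Consider a DAG instance covered by s,t-paths P_1,…,P_k whose visited node sets pairwise intersect exactly in {0, n} and together contain all nodes, and such that every edge whose source is an internal node (different from 0 and n) of some P_i has its destination in the visited node set V(P_i) of the same P_i. For i = 1,…,k define E_i := {e ∈ E : src(e) ∈ V(P_i)∖{0,n}} ∪ {e ∈ E : src(e) = 0 and dst(e) ∈ V(P_i)∖{0,n}}, and additionally put every edge with src(e) = 0 and dst(e) = n into E_1. Then E_1,…,E_k are pairwise disjoint with union E, and every s,t-path has all of its edges contained in E_i for exactly one index i. -/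
open MeasureTheory ProbabilityTheory

/-- The strand `E_i` of a node-disjoint cover: edges leaving an internal node of `P i`,
edges from `s` to an internal node of `P i`, and (for `i = 0`) the direct `s,t`-edges. -/
def DAGInst.strand (G : DAGInst) {k : ℕ} (P : Fin k → List G.E) (i : Fin k) :
    Set G.E :=
  {e | (G.Visits (P i) (G.src e) ∧ G.src e ≠ 0 ∧ G.src e ≠ G.n) ∨
       (G.src e = 0 ∧ G.Visits (P i) (G.dst e) ∧ G.dst e ≠ 0 ∧ G.dst e ≠ G.n) ∨
       ((i : ℕ) = 0 ∧ G.src e = 0 ∧ G.dst e = G.n)}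

/-- **Strand partition for disjoint covers** (used in the proof of Theorem 4.4). -/
theorem strand_partition
    (G : DAGInst) (k : ℕ) (hk : 1 ≤ k)
    (P : Fin k → List G.E) (hP : ∀ i, G.IsPath (P i))
    (hcover : ∀ v ≤ G.n, ∃ i, G.Visits (P i) v)
    (hdisj : ∀ i j, i ≠ j → ∀ v, G.Visits (P i) v → G.Visits (P j) v →
      v = 0 ∨ v = G.n)
    (hclosed : ∀ i, ∀ e : G.E, G.Visits (P i) (G.src e) →
      G.src e ≠ 0 → G.src e ≠ G.n → G.Visits (P i) (G.dst e)) :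
    (∀ i j, i ≠ j → G.strand P i ∩ G.strand P j = ∅) ∧
      (⋃ i, G.strand P i) = Set.univ ∧
      ∀ p : List G.E, G.IsPath p → ∃! i, ∀ e ∈ p, e ∈ G.strand P i := by
  have srcne : ∀ e : G.E, G.src e ≠ G.n := fun e h => by
    have := lt_of_lt_of_le (G.src_lt_dst e) (G.dst_le_n e); omega
  have dstne0 : ∀ e : G.E, G.dst e ≠ 0 := fun e h => by
    have := G.src_lt_dst e; omega
  -- auxiliary lemma: a chain whose head leaves an internal node visited by `P i`
  -- stays in strand i
  have aux : ∀ i : Fin k, ∀ p : List G.E,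
      List.Chain' (fun e f => G.dst e = G.src f) p →
      (∀ e, p.head? = some e → G.Visits (P i) (G.src e) ∧ G.src e ≠ 0) →
      ∀ e ∈ p, e ∈ G.strand P i := by
    intro i p
    induction p with
    | nil => intro _ _ e he; cases he
    | cons a rest ih =>
      intro hch hh e he
      obtain ⟨hv, h0⟩ := hh a rfl
      have hvd : G.Visits (P i) (G.dst a) := hclosed i a hv h0 (srcne a)
      rcases List.mem_cons.mp he with rfl | he
      · exact Or.inl ⟨hv, h0, srcne e⟩
      · refine ih hch.tail ?_ e he
        intro f hf
        cases rest with
        | nil => cases hf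
        | cons b tl =>
          have hab : G.dst a = G.src b := (List.isChain_cons_cons.mp hch).1
          have hfb : b = f := by simpa using hf
          subst hfb
          exact ⟨hab ▸ hvd, hab ▸ dstne0 a⟩
  refine ⟨?_, ?_, ?_⟩
  · intro i j hij
    ext e
    simp only [Set.mem_inter_iff, Set.mem_empty_iff_false, iff_false]
    rintro ⟨hi, hj⟩
    rcases hi with ⟨hv, h0, hn⟩ | ⟨h0, hv, hd0, hdn⟩ | ⟨hi0, h0, hdn⟩ <;>
      rcases hj with ⟨hv', h0', hn'⟩ | ⟨h0', hv', hd0', hdn'⟩ | ⟨hj0, h0', hdn'⟩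
    · rcases hdisj i j hij _ hv hv' with h | h
      · exact h0 h
      · exact hn h
    · exact h0 h0'
    · exact h0 h0'
    · exact h0' h0
    · rcases hdisj i j hij _ hv hv' with h | h
      · exact hd0 h
      · exact hdn h
    · exact hdn hdn'
    · exact h0' h0
    · exact hdn' hdn
    · exact hij (Fin.ext (hi0.trans hj0.symm))
  · apply Set.eq_univ_of_forall
    intro e
    rw [Set.mem_iUnion]
    by_cases h0 : G.src e = 0
    · by_cases hn : G.dst e = G.n
      · exact ⟨⟨0, hk⟩, Or.inr (Or.inr ⟨rfl, h0, hn⟩)⟩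
      · obtain ⟨i, hi⟩ := hcover (G.dst e) (G.dst_le_n e)
        exact ⟨i, Or.inr (Or.inl ⟨h0, hi, dstne0 e, hn⟩)⟩
    · obtain ⟨i, hi⟩ := hcover (G.src e)
        (le_of_lt (lt_of_lt_of_le (G.src_lt_dst e) (G.dst_le_n e)))
      exact ⟨i, Or.inl ⟨hi, h0, srcne e⟩⟩
  · rintro p ⟨h1, h2, h3⟩
    cases p with
    | nil => simp at h1
    | cons a rest =>
      have hsa : G.src a = 0 := by simpa using h1
      by_cases hda : G.dst a = G.n
      · have hrest : rest = [] := by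
          cases rest with
          | nil => rfl
          | cons b tl =>
            have hab : G.dst a = G.src b := (List.isChain_cons_cons.mp h3).1
            exact absurd (hab ▸ hda : G.src b = G.n) (srcne b)
        subst hrest
        refine ⟨⟨0, hk⟩, ?_, ?_⟩
        · intro e he
          have : e = a := by simpa using he
          subst this
          exact Or.inr (Or.inr ⟨rfl, hsa, hda⟩)
        · intro j hj
          rcases hj a (by simp) with ⟨_, h0, _⟩ | ⟨_, _, _, hdn⟩ | ⟨hj0, _, _⟩
          · exact absurd hsa h0
          · exact absurd hda hdn
          · exact Fin.ext hj0
      · obtain ⟨i, hi⟩ := hcover (G.dst a) (G.dst_le_n a)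
        refine ⟨i, ?_, ?_⟩
        · intro e he
          rcases List.mem_cons.mp he with rfl | he
          · exact Or.inr (Or.inl ⟨hsa, hi, dstne0 e, hda⟩)
          · refine aux i rest h3.tail ?_ e he
            intro f hf
            cases rest with
            | nil => cases hf
            | cons b tl =>
              have hab : G.dst a = G.src b := (List.isChain_cons_cons.mp h3).1
              have hfb : b = f := by simpa using hf
              subst hfb
              exact ⟨hab ▸ hi, hab ▸ dstne0 a⟩
        · intro j hj
          rcases hj a (by simp) with ⟨_, h0, _⟩ | ⟨_, hv, _, _⟩ | ⟨_, _, hdn⟩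
          · exact absurd hsa h0
          · by_contra hne
            rcases hdisj j i hne _ hv hi with h | h
            · exact dstne0 a h
            · exact hda h
          · exact absurd hdn hda
end

section
/- Online upper bound in the 4/9-upper-bound instance (Example 3.5 of the paper). Let 0 < ε ≤ 2/3 and let B and C be independent random variables with P(B = 2) = P(B = 0) = 1/2 and P(C = 2/ε) = ε = 1 − P(C = 0). Let D, F, G, H be random variables with D taking values in {0,1,2} and F, G, H taking values in {0,1}, such that D is independent of (B, C) and the pair (D, G) is independent of C. Then the payoff R := 2·1_{D=0} + (1 + B·F)·1_{D=1} + (B·G + C·H·(1−G))·1_{D=2} satisfies E[R] ≤ 2. -/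
open MeasureTheory ProbabilityTheory

/-- **Example 3.5, online upper bound**: every online strategy in the 4/9-instance,
encoded by decisions `D ∈ {0,1,2}` (independent of `(B, C)`), `F, G, H ∈ {0,1}` with
`(D, G)` independent of `C`, has expected payoff at most `2`. -/
theorem example_49_online_value
    {Ω : Type} [MeasurableSpace Ω] (μ : Measure Ω) [IsProbabilityMeasure μ]
    (ε : ℝ) (hε0 : 0 < ε) (hε1 : ε ≤ 2 / 3)
    (B C : Ω → ℝ) (hBmeas : Measurable B) (hCmeas : Measurable C)
    (hBC : IndepFun B C μ)
    (hB2 : μ {ω | B ω = 2} = 1 / 2) (hB0 : μ {ω | B ω = 0} = 1 / 2)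
    (hC : μ {ω | C ω = 2 / ε} = ENNReal.ofReal ε)
    (hC0 : μ {ω | C ω = 0} = ENNReal.ofReal (1 - ε))
    (D : Ω → ℕ) (F G H : Ω → ℝ)
    (hDmeas : Measurable D) (hFmeas : Measurable F)
    (hGmeas : Measurable G) (hHmeas : Measurable H)
    (hDrange : ∀ ω, D ω ≤ 2)
    (hFrange : ∀ ω, F ω = 0 ∨ F ω = 1)
    (hGrange : ∀ ω, G ω = 0 ∨ G ω = 1)
    (hHrange : ∀ ω, H ω = 0 ∨ H ω = 1)
    (hDindep : IndepFun D (fun ω => (B ω, C ω)) μ)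
    (hDGindep : IndepFun (fun ω => (D ω, G ω)) C μ) :
    (∫ ω, ((if D ω = 0 then (2 : ℝ) else 0) +
      (if D ω = 1 then 1 + B ω * F ω else 0) +
      (if D ω = 2 then B ω * G ω + C ω * H ω * (1 - G ω) else 0)) ∂μ) ≤ 2 := by
  classical
  -- indicator functions
  set ι0 : Ω → ℝ := fun ω => if D ω = 0 then 1 else 0 with hι0def
  set ι1 : Ω → ℝ := fun ω => if D ω = 1 then 1 else 0 with hι1def
  set ιG1 : Ω → ℝ := fun ω => if D ω = 2 ∧ G ω = 1 then 1 else 0 with hιG1def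
  set ιG0 : Ω → ℝ := fun ω => if D ω = 2 ∧ G ω = 0 then 1 else 0 with hιG0def
  have hι0m : Measurable ι0 :=
    Measurable.ite (hDmeas (measurableSet_singleton 0)) measurable_const measurable_const
  have hι1m : Measurable ι1 :=
    Measurable.ite (hDmeas (measurableSet_singleton 1)) measurable_const measurable_const
  have hsetG1 : MeasurableSet {ω | D ω = 2 ∧ G ω = 1} := by
    have : {ω | D ω = 2 ∧ G ω = 1} = {ω | D ω = 2} ∩ {ω | G ω = 1} := rfl
    rw [this]
    exact (hDmeas (measurableSet_singleton 2)).inter (hGmeas (measurableSet_singleton 1))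
  have hsetG0 : MeasurableSet {ω | D ω = 2 ∧ G ω = 0} := by
    have : {ω | D ω = 2 ∧ G ω = 0} = {ω | D ω = 2} ∩ {ω | G ω = 0} := rfl
    rw [this]
    exact (hDmeas (measurableSet_singleton 2)).inter (hGmeas (measurableSet_singleton 0))
  have hιG1m : Measurable ιG1 := Measurable.ite hsetG1 measurable_const measurable_const
  have hιG0m : Measurable ιG0 := Measurable.ite hsetG0 measurable_const measurable_const
  -- a.e. value facts
  have hBae : ∀ᵐ ω ∂μ, B ω = 2 ∨ B ω = 0 := by
    have hm2 : MeasurableSet {ω | B ω = 2} := hBmeas (measurableSet_singleton 2)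
    have hm0 : MeasurableSet {ω | B ω = 0} := hBmeas (measurableSet_singleton 0)
    have hdisj : Disjoint {ω | B ω = 2} {ω | B ω = 0} := by
      rw [Set.disjoint_left]
      intro ω h2 h0
      simp only [Set.mem_setOf_eq] at h2 h0
      rw [h2] at h0; norm_num at h0
    have hu : μ ({ω | B ω = 2} ∪ {ω | B ω = 0}) = 1 := by
      rw [measure_union hdisj hm0, hB2, hB0, ENNReal.add_halves]
    have hcompl : μ ({ω | B ω = 2} ∪ {ω | B ω = 0})ᶜ = 0 := by
      rw [measure_compl (hm2.union hm0) (measure_ne_top _ _), hu, measure_univ, tsub_self]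
    have hsub : {ω | ¬(B ω = 2 ∨ B ω = 0)} = ({ω | B ω = 2} ∪ {ω | B ω = 0})ᶜ := by
      ext ω; simp [not_or]
    rw [ae_iff, hsub]
    exact hcompl
  have hCae : ∀ᵐ ω ∂μ, C ω = 2 / ε ∨ C ω = 0 := by
    have hm2 : MeasurableSet {ω | C ω = 2 / ε} := hCmeas (measurableSet_singleton _)
    have hm0 : MeasurableSet {ω | C ω = 0} := hCmeas (measurableSet_singleton 0)
    have hdisj : Disjoint {ω | C ω = 2 / ε} {ω | C ω = 0} := by
      rw [Set.disjoint_left]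
      intro ω h2 h0
      simp only [Set.mem_setOf_eq] at h2 h0
      rw [h2] at h0
      have : (2 : ℝ) / ε > 0 := by positivity
      linarith
    have hu : μ ({ω | C ω = 2 / ε} ∪ {ω | C ω = 0}) = 1 := by
      rw [measure_union hdisj hm0, hC, hC0, ← ENNReal.ofReal_add hε0.le (by linarith)]
      norm_num
    have hcompl : μ ({ω | C ω = 2 / ε} ∪ {ω | C ω = 0})ᶜ = 0 := by
      rw [measure_compl (hm2.union hm0) (measure_ne_top _ _), hu, measure_univ, tsub_self]
    have hsub : {ω | ¬(C ω = 2 / ε ∨ C ω = 0)} = ({ω | C ω = 2 / ε} ∪ {ω | C ω = 0})ᶜ := by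
      ext ω; simp [not_or]
    rw [ae_iff, hsub]
    exact hcompl
  -- expectations of B and C
  have hEB : ∫ ω, B ω ∂μ = 1 := by
    have hm2 : MeasurableSet {ω | B ω = 2} := hBmeas (measurableSet_singleton 2)
    have hcongr : B =ᵐ[μ] fun ω => Set.indicator {ω | B ω = 2} (fun _ => (2:ℝ)) ω := by
      filter_upwards [hBae] with ω hω
      rcases hω with h | h
      · rw [Set.indicator_of_mem (by exact h : ω ∈ {ω | B ω = 2})]
        exact h
      · rw [Set.indicator_of_notMem]
        · exact h
        · intro hmem
          have : B ω = 2 := hmem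
          rw [h] at this; norm_num at this
    rw [integral_congr_ae hcongr, integral_indicator_const (2:ℝ) hm2, measureReal_def, hB2]
    norm_num
  have hEC : ∫ ω, C ω ∂μ = 2 := by
    have hm2 : MeasurableSet {ω | C ω = 2 / ε} := hCmeas (measurableSet_singleton _)
    have hne : (2 : ℝ) / ε ≠ 0 := by positivity
    have hcongr : C =ᵐ[μ] fun ω => Set.indicator {ω | C ω = 2 / ε} (fun _ => (2/ε : ℝ)) ω := by
      filter_upwards [hCae] with ω hω
      rcases hω with h | h
      · rw [Set.indicator_of_mem (by exact h : ω ∈ {ω | C ω = 2 / ε})]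
        exact h
      · rw [Set.indicator_of_notMem]
        · exact h
        · intro hmem
          have : C ω = 2 / ε := hmem
          rw [h] at this
          exact hne this.symm
    rw [integral_congr_ae hcongr, integral_indicator_const (2/ε : ℝ) hm2, measureReal_def, hC,
      ENNReal.toReal_ofReal hε0.le, smul_eq_mul]
    field_simp
  -- integrability
  have hbdd : ∀ (f : Ω → ℝ) (M : ℝ), Measurable f → (∀ᵐ ω ∂μ, ‖f ω‖ ≤ M) → Integrable f μ :=
    fun f M hm hb => (integrable_const M).mono' hm.aestronglyMeasurable hb
  have intι0 : Integrable ι0 μ := by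
    refine hbdd _ 1 hι0m (ae_of_all _ fun ω => ?_)
    simp only [hι0def]; split_ifs <;> norm_num
  have intι1 : Integrable ι1 μ := by
    refine hbdd _ 1 hι1m (ae_of_all _ fun ω => ?_)
    simp only [hι1def]; split_ifs <;> norm_num
  have intιG1 : Integrable ιG1 μ := by
    refine hbdd _ 1 hιG1m (ae_of_all _ fun ω => ?_)
    simp only [hιG1def]; split_ifs <;> norm_num
  have intιG0 : Integrable ιG0 μ := by
    refine hbdd _ 1 hιG0m (ae_of_all _ fun ω => ?_)
    simp only [hιG0def]; split_ifs <;> norm_num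
  have intBι1 : Integrable (fun ω => B ω * ι1 ω) μ := by
    refine hbdd _ 2 (hBmeas.mul hι1m) ?_
    filter_upwards [hBae] with ω hB'
    simp only [hι1def]
    rcases hB' with h | h <;> rw [h] <;> split_ifs <;> norm_num
  have intCιG0 : Integrable (fun ω => C ω * ιG0 ω) μ := by
    refine hbdd _ (2/ε) (hCmeas.mul hιG0m) ?_
    filter_upwards [hCae] with ω hC'
    have hι : |ιG0 ω| ≤ 1 := by simp only [hιG0def]; split_ifs <;> norm_num
    have hc : |C ω| ≤ 2/ε := by
      rcases hC' with h | h <;> rw [h]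
      · rw [abs_of_nonneg (by positivity)]
      · rw [abs_zero]; positivity
    calc ‖C ω * ιG0 ω‖ = |C ω| * |ιG0 ω| := abs_mul _ _
      _ ≤ (2/ε) * 1 := mul_le_mul hc hι (abs_nonneg _) (by positivity)
      _ = 2/ε := mul_one _
  -- independence consequences
  have hmulB : ∫ ω, B ω * ι1 ω ∂μ = ∫ ω, ι1 ω ∂μ := by
    have hφ : Measurable (fun n : ℕ => if n = 1 then (1:ℝ) else 0) :=
      Measurable.ite (measurableSet_singleton 1) measurable_const measurable_const
    have hind : IndepFun ι1 B μ := by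
      have := hDindep.comp hφ (measurable_fst : Measurable (Prod.fst : ℝ × ℝ → ℝ))
      exact this
    have hswap : ∫ ω, B ω * ι1 ω ∂μ = (∫ ω, B ω ∂μ) * ∫ ω, ι1 ω ∂μ :=
      hind.symm.integral_fun_mul_eq_mul_integral hBmeas.aestronglyMeasurable hι1m.aestronglyMeasurable
    rw [hswap, hEB, one_mul]
  have hmulC : ∫ ω, C ω * ιG0 ω ∂μ = 2 * ∫ ω, ιG0 ω ∂μ := by
    have hψ : Measurable (fun p : ℕ × ℝ => if p.1 = 2 ∧ p.2 = 0 then (1:ℝ) else 0) := by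
      refine Measurable.ite ?_ measurable_const measurable_const
      have : {p : ℕ × ℝ | p.1 = 2 ∧ p.2 = 0} =
          (Prod.fst ⁻¹' {2}) ∩ (Prod.snd ⁻¹' {0}) := rfl
      rw [this]
      exact (measurable_fst (measurableSet_singleton 2)).inter
        (measurable_snd (measurableSet_singleton 0))
    have hind : IndepFun ιG0 C μ := by
      have := hDGindep.comp hψ (measurable_id : Measurable (id : ℝ → ℝ))
      exact this
    have hswap : ∫ ω, C ω * ιG0 ω ∂μ = (∫ ω, C ω ∂μ) * ∫ ω, ιG0 ω ∂μ :=
      hind.symm.integral_fun_mul_eq_mul_integral hCmeas.aestronglyMeasurable hιG0m.aestronglyMeasurable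
    rw [hswap, hEC]
  -- pointwise partition identity
  have hsum : ∀ ω, ι0 ω + ι1 ω + ιG1 ω + ιG0 ω = 1 := by
    intro ω
    have hD := hDrange ω
    have hd : D ω = 0 ∨ D ω = 1 ∨ D ω = 2 := by omega
    simp only [hι0def, hι1def, hιG1def, hιG0def]
    rcases hd with h | h | h <;> rcases hGrange ω with hG | hG <;>
      simp [h, hG] <;> norm_num
  have hone : ∫ ω, ι0 ω ∂μ + ∫ ω, ι1 ω ∂μ + ∫ ω, ιG1 ω ∂μ + ∫ ω, ιG0 ω ∂μ = 1 := by
    have : ∫ ω, (ι0 ω + ι1 ω + ιG1 ω + ιG0 ω) ∂μ = 1 := by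
      have : (fun ω => ι0 ω + ι1 ω + ιG1 ω + ιG0 ω) = fun _ => (1:ℝ) := by
        funext ω; exact hsum ω
      rw [this]; simp
    have i12 : Integrable (fun ω => ι0 ω + ι1 ω) μ := intι0.add intι1
    have i123 : Integrable (fun ω => ι0 ω + ι1 ω + ιG1 ω) μ := i12.add intιG1
    rw [integral_add i123 intιG0, integral_add i12 intιG1, integral_add intι0 intι1] at this
    linarith
  -- the dominating function
  set S : Ω → ℝ := fun ω =>
    2 * ι0 ω + ι1 ω + B ω * ι1 ω + 2 * ιG1 ω + C ω * ιG0 ω with hSdef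
  have intS : Integrable S μ :=
    (((((intι0.const_mul 2).add intι1).add intBι1).add (intιG1.const_mul 2)).add intCιG0)
  have intR : Integrable (fun ω => (if D ω = 0 then (2 : ℝ) else 0) +
      (if D ω = 1 then 1 + B ω * F ω else 0) +
      (if D ω = 2 then B ω * G ω + C ω * H ω * (1 - G ω) else 0)) μ := by
    refine hbdd _ (7 + 2/ε) ?_ ?_
    · refine Measurable.add (Measurable.add ?_ ?_) ?_
      · exact Measurable.ite (hDmeas (measurableSet_singleton 0)) measurable_const
          measurable_const
      · exact Measurable.ite (hDmeas (measurableSet_singleton 1))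
          (measurable_const.add (hBmeas.mul hFmeas)) measurable_const
      · exact Measurable.ite (hDmeas (measurableSet_singleton 2))
          ((hBmeas.mul hGmeas).add ((hCmeas.mul hHmeas).mul
            (measurable_const.sub hGmeas))) measurable_const
    · filter_upwards [hBae, hCae] with ω hB' hC'
      have hεp : (0:ℝ) < 2 / ε := by positivity
      have hb0 : 0 ≤ B ω := by rcases hB' with h | h <;> rw [h] <;> norm_num
      have hb2 : B ω ≤ 2 := by rcases hB' with h | h <;> rw [h] <;> norm_num
      have hc0 : 0 ≤ C ω := by rcases hC' with h | h <;> rw [h] <;> positivity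
      have hc2 : C ω ≤ 2 / ε := by rcases hC' with h | h <;> rw [h] <;> linarith
      have tBF1 : 0 ≤ B ω * F ω := by
        rcases hFrange ω with hf | hf <;> rw [hf] <;> linarith
      have tBF2 : B ω * F ω ≤ 2 := by
        rcases hFrange ω with hf | hf <;> rw [hf] <;> linarith
      have tBG1 : 0 ≤ B ω * G ω := by
        rcases hGrange ω with hg | hg <;> rw [hg] <;> linarith
      have tBG2 : B ω * G ω ≤ 2 := by
        rcases hGrange ω with hg | hg <;> rw [hg] <;> linarith
      have tCH1 : 0 ≤ C ω * H ω * (1 - G ω) := by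
        rcases hHrange ω with hh | hh <;> rcases hGrange ω with hg | hg <;>
          rw [hh, hg] <;> linarith
      have tCH2 : C ω * H ω * (1 - G ω) ≤ C ω := by
        rcases hHrange ω with hh | hh <;> rcases hGrange ω with hg | hg <;>
          rw [hh, hg] <;> linarith
      have hd : D ω = 0 ∨ D ω = 1 ∨ D ω = 2 := by have := hDrange ω; omega
      rcases hd with h | h | h <;> simp only [h, Real.norm_eq_abs, abs_le] <;>
        norm_num <;> constructor <;> linarith
  -- a.e. pointwise bound
  have key : ∀ᵐ ω ∂μ, (if D ω = 0 then (2 : ℝ) else 0) +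
      (if D ω = 1 then 1 + B ω * F ω else 0) +
      (if D ω = 2 then B ω * G ω + C ω * H ω * (1 - G ω) else 0) ≤ S ω := by
    filter_upwards [hBae, hCae] with ω hB' hC'
    have hd : D ω = 0 ∨ D ω = 1 ∨ D ω = 2 := by have := hDrange ω; omega
    have hb0 : 0 ≤ B ω := by rcases hB' with h | h <;> rw [h] <;> norm_num
    have hb2 : B ω ≤ 2 := by rcases hB' with h | h <;> rw [h] <;> norm_num
    have hc0 : 0 ≤ C ω := by rcases hC' with h | h <;> rw [h] <;> positivity
    have tBF : B ω * F ω ≤ B ω := by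
      rcases hFrange ω with hf | hf <;> rw [hf] <;> linarith
    have tCH : C ω * H ω ≤ C ω := by
      rcases hHrange ω with hh | hh <;> rw [hh] <;> linarith
    simp only [hSdef, hι0def, hι1def, hιG1def, hιG0def]
    rcases hd with h | h | h <;> rcases hGrange ω with hg | hg <;>
      simp only [h, hg] <;> norm_num <;> linarith
  -- combine
  calc (∫ ω, ((if D ω = 0 then (2 : ℝ) else 0) +
      (if D ω = 1 then 1 + B ω * F ω else 0) +
      (if D ω = 2 then B ω * G ω + C ω * H ω * (1 - G ω) else 0)) ∂μ)
      ≤ ∫ ω, S ω ∂μ := integral_mono_ae intR intS key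
    _ = 2 := by
        have expand : ∫ ω, S ω ∂μ =
            2 * ∫ ω, ι0 ω ∂μ + ∫ ω, ι1 ω ∂μ + ∫ ω, B ω * ι1 ω ∂μ +
            2 * ∫ ω, ιG1 ω ∂μ + ∫ ω, C ω * ιG0 ω ∂μ := by
          simp only [hSdef]
          have i1 : Integrable (fun ω => 2 * ι0 ω) μ := intι0.const_mul 2
          have i2 : Integrable (fun ω => 2 * ι0 ω + ι1 ω) μ := i1.add intι1
          have i3 : Integrable (fun ω => 2 * ι0 ω + ι1 ω + B ω * ι1 ω) μ := i2.add intBι1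
          have i4g : Integrable (fun ω => 2 * ιG1 ω) μ := intιG1.const_mul 2
          have i4 : Integrable
              (fun ω => 2 * ι0 ω + ι1 ω + B ω * ι1 ω + 2 * ιG1 ω) μ := i3.add i4g
          rw [integral_add i4 intCιG0, integral_add i3 i4g, integral_add i2 intBι1,
            integral_add i1 intι1, integral_const_mul, integral_const_mul]
        rw [expand, hmulB, hmulC]
        linarith
end
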